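/- arXiv:1709.06838 — 5 statements merged into one kernel-verified Lean document; each statement's English description precedes it below -/
import Mathlib

section
/- Tensorization of the power functional: let g be a nonnegative random variable in L^q on a product probability space with n independent coordinates X_1,...,X_n, where q ∈ (1,2]. Then E[g^q] - (E[g])^q ≤ E[ Σ_{i=1}^n ( E_i[g^q] - (E_i[g])^q ) ], where E_i denotes expectation with respect to the i-th coordinate only. -/
open MeasureTheory Real Set

universe u

variable {q : ℝ}



section Analytic

variable {q : ℝ}

noncomputable def Dq (q : ℝ) (p : ℝ × ℝ) : ℝ :=
  p.1 ^ q + (q - 1) * p.2 ^ q - q * p.1 * p.2 ^ (q - 1)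

lemma continuous_rpow_const' (hq : 0 ≤ q) : Continuous fun x : ℝ => x ^ q :=
  continuous_iff_continuousAt.mpr fun x => Real.continuousAt_rpow_const x q (Or.inr hq)

lemma continuous_Dq (hq1 : 1 < q) : Continuous (Dq q) := by
  have h1 : (0:ℝ) ≤ q := by linarith
  have h2 : (0:ℝ) ≤ q - 1 := by linarith
  exact (((continuous_rpow_const' h1).comp continuous_fst).add
      (continuous_const.mul ((continuous_rpow_const' h1).comp continuous_snd))).sub
    ((continuous_const.mul continuous_fst).mul
      ((continuous_rpow_const' h2).comp continuous_snd))

lemma rpow_sub_one_mul_self {x : ℝ} (hx : 0 ≤ x) (hq1 : 1 < q) :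
    x ^ (q - 1) * x = x ^ q := by
  nth_rewrite 2 [← Real.rpow_one x]
  rw [← Real.rpow_add' hx (by intro h; simp at h; linarith : (q-1) + 1 ≠ 0)]
  ring_nf

lemma xy_le (hq1 : 1 < q) {x y : ℝ} (hx : 0 ≤ x) (hy : 0 ≤ y) :
    x * y ^ (q - 1) ≤ x ^ q + y ^ q := by
  have h2 : (0:ℝ) ≤ q - 1 := by linarith
  rcases le_total y x with h | h
  · have h3 : y ^ (q-1) ≤ x ^ (q-1) := Real.rpow_le_rpow hy h h2
    have hxx : x ^ (q-1) * x = x ^ q := rpow_sub_one_mul_self hx hq1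
    nlinarith [Real.rpow_nonneg hy q, mul_le_mul_of_nonneg_left h3 hx]
  · have hy1 : y ^ (q-1) * y = y ^ q := rpow_sub_one_mul_self hy hq1
    have h4 : x * y ^ (q-1) ≤ y ^ (q-1) * y := by
      rw [mul_comm (y ^ (q-1)) y]
      exact mul_le_mul_of_nonneg_right h (Real.rpow_nonneg hy _)
    nlinarith [Real.rpow_nonneg hx q]

lemma quad_nonneg {X Y Z u v : ℝ} (hX : 0 ≤ X) (hZ : 0 ≤ Z) (h : Y ^ 2 ≤ X * Z) :
    0 ≤ X * u ^ 2 - 2 * Y * u * v + Z * v ^ 2 := by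
  rcases eq_or_lt_of_le hX with hX0 | hX0
  · have hY : Y = 0 := by nlinarith
    subst hY
    rw [← hX0]
    nlinarith [mul_nonneg hZ (sq_nonneg v)]
  · nlinarith [sq_nonneg (X * u - Y * v), mul_nonneg (sub_nonneg.2 h) (sq_nonneg v)]

/-- Key AM-GM inequality for the determinant of the Hessian. -/
lemma key_amgm (hq1 : 1 < q) (hq2 : q ≤ 2) {A B : ℝ} (hA : 0 < A) (hB : 0 < B) :
    (B ^ (q-2)) ^ 2 ≤ A ^ (q-2) * (B ^ (q-3) * ((q-1) * B + (2-q) * A)) := by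
  have h1 : (0:ℝ) ≤ q - 1 := by linarith
  have h2 : (0:ℝ) ≤ 2 - q := by linarith
  set u : ℝ := A ^ (q-2) * B ^ (q-2) with hu
  set v : ℝ := A ^ (q-1) * B ^ (q-3) with hv
  have hu0 : 0 ≤ u := mul_nonneg (Real.rpow_nonneg hA.le _) (Real.rpow_nonneg hB.le _)
  have hv0 : 0 ≤ v := mul_nonneg (Real.rpow_nonneg hA.le _) (Real.rpow_nonneg hB.le _)
  have hRHS : A ^ (q-2) * (B ^ (q-3) * ((q-1) * B + (2-q) * A))
      = (q-1) * u + (2-q) * v := by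
    have hBB : B ^ (q-3) * B = B ^ (q-2) := by
      nth_rewrite 2 [← Real.rpow_one B]
      rw [← Real.rpow_add hB]; ring_nf
    have hAA : A ^ (q-2) * A = A ^ (q-1) := by
      nth_rewrite 2 [← Real.rpow_one A]
      rw [← Real.rpow_add hA]; ring_nf
    rw [hu, hv, ← hBB, ← hAA]; ring
  rw [hRHS]
  have amgm := Real.geom_mean_le_arith_mean2_weighted h1 h2 hu0 hv0
    (by ring : (q-1) + (2-q) = 1)
  refine le_trans (le_of_eq ?_) amgm
  rw [hu, hv, Real.mul_rpow (Real.rpow_nonneg hA.le _) (Real.rpow_nonneg hB.le _),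
    Real.mul_rpow (Real.rpow_nonneg hA.le _) (Real.rpow_nonneg hB.le _),
    ← Real.rpow_mul hA.le, ← Real.rpow_mul hB.le, ← Real.rpow_mul hA.le, ← Real.rpow_mul hB.le]
  have hAe : A ^ ((q-2) * (q-1)) * A ^ ((q-1) * (2-q)) = 1 := by
    rw [← Real.rpow_add hA, show (q-2)*(q-1) + (q-1)*(2-q) = 0 by ring, Real.rpow_zero]
  have hBe : B ^ ((q-2) * (q-1)) * B ^ ((q-3) * (2-q)) = B ^ (q-2) * B ^ (q-2) := by
    rw [← Real.rpow_add hB, ← Real.rpow_add hB,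
      show (q-2)*(q-1) + (q-3)*(2-q) = (q-2) + (q-2) by ring]
  calc (B ^ (q-2)) ^ 2 = B ^ (q-2) * B ^ (q-2) := sq (B ^ (q-2)) ▸ (sq (B ^ (q-2)))
    _ = (A ^ ((q-2)*(q-1)) * A ^ ((q-1)*(2-q))) * (B ^ ((q-2)*(q-1)) * B ^ ((q-3)*(2-q))) := by
        rw [hAe, hBe, one_mul]
    _ = A ^ ((q-2)*(q-1)) * B ^ ((q-2)*(q-1)) * (A ^ ((q-1)*(2-q)) * B ^ ((q-3)*(2-q))) := by ring

end Analytic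

set_option maxHeartbeats 1000000 in
lemma convexOn_Dq (hq1 : 1 < q) (hq2 : q ≤ 2) :
    ConvexOn ℝ (Set.Ici (0:ℝ) ×ˢ Set.Ici (0:ℝ)) (Dq q) := by
  have hq0 : (0:ℝ) < q := by linarith
  have hq1' : (0:ℝ) < q - 1 := by linarith
  constructor
  · exact (convex_Ici 0).prod (convex_Ici 0)
  rintro ⟨x₁, y₁⟩ ⟨hx₁, hy₁⟩ ⟨x₂, y₂⟩ ⟨hx₂, hy₂⟩ a b ha hb hab
  simp only [Set.mem_Ici] at hx₁ hy₁ hx₂ hy₂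
  have key : ∀ u₁ v₁ u₂ v₂ : ℝ, 0 ≤ u₁ → 0 ≤ v₁ → 0 ≤ u₂ → 0 ≤ v₂ →
      ConvexOn ℝ (Set.Icc (0:ℝ) 1)
        (fun t => Dq q (t * (u₂ - u₁) + u₁, t * (v₂ - v₁) + v₁)) := by
    clear hx₁ hy₁ hx₂ hy₂ ha hb hab a b x₁ y₁ x₂ y₂
    intro x₁ y₁ x₂ y₂ hx₁ hy₁ hx₂ hy₂
    have hlineB : ∀ t : ℝ, t * (y₂ - y₁) + y₁ = AffineMap.lineMap y₁ y₂ t := by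
      intro t
      simp only [AffineMap.lineMap_apply_module, smul_eq_mul]
      ring
    have hlineA : ∀ t : ℝ, t * (x₂ - x₁) + x₁ = AffineMap.lineMap x₁ x₂ t := by
      intro t
      simp only [AffineMap.lineMap_apply_module, smul_eq_mul]
      ring
    by_cases hx : x₁ = 0 ∧ x₂ = 0
    · obtain ⟨rfl, rfl⟩ := hx
      have hfun : (fun t : ℝ => Dq q (t * ((0:ℝ) - 0) + 0, t * (y₂ - y₁) + y₁))
          = ((q-1) • ((fun y : ℝ => y ^ q) ∘ (AffineMap.lineMap y₁ y₂))) := by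
        funext t
        simp only [Dq, Pi.smul_apply, Function.comp_apply, smul_eq_mul, sub_zero,
          mul_zero, zero_add, sub_self]
        rw [Real.zero_rpow (ne_of_gt hq0), ← hlineB t]
        ring
      rw [hfun]
      refine ConvexOn.smul (by linarith) ?_
      refine ((convexOn_rpow hq1.le).comp_affineMap _).subset ?_ (convex_Icc 0 1)
      rintro t ⟨ht0, ht1⟩
      simp only [Set.mem_preimage, Set.mem_Ici, ← hlineB t]
      nlinarith
    · by_cases hy : y₁ = 0 ∧ y₂ = 0
      · obtain ⟨rfl, rfl⟩ := hy
        have hfun : (fun t : ℝ => Dq q (t * (x₂ - x₁) + x₁, t * ((0:ℝ) - 0) + 0))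
            = ((fun y : ℝ => y ^ q) ∘ (AffineMap.lineMap x₁ x₂)) := by
          funext t
          simp only [Dq, Function.comp_apply, sub_zero, mul_zero, zero_add, sub_self]
          rw [Real.zero_rpow (ne_of_gt hq0),
            Real.zero_rpow (ne_of_gt hq1'), ← hlineA t]
          ring
        rw [hfun]
        refine ((convexOn_rpow hq1.le).comp_affineMap _).subset ?_ (convex_Icc 0 1)
        rintro t ⟨ht0, ht1⟩
        simp only [Set.mem_preimage, Set.mem_Ici, ← hlineA t]
        nlinarith
      · -- general case
        set dx : ℝ := x₂ - x₁ with hdx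
        set dy : ℝ := y₂ - y₁ with hdy
        set A : ℝ → ℝ := fun t => t * dx + x₁ with hA
        set B : ℝ → ℝ := fun t => t * dy + y₁ with hB
        have hApos : ∀ t ∈ Ioo (0:ℝ) 1, 0 < A t := by
          rintro t ⟨ht0, ht1⟩
          rcases (not_and_or.mp hx) with h | h
          · have : 0 < x₁ := lt_of_le_of_ne hx₁ (Ne.symm h)
            simp only [hA, hdx]; nlinarith
          · have : 0 < x₂ := lt_of_le_of_ne hx₂ (Ne.symm h)
            simp only [hA, hdx]; nlinarith
        have hBpos : ∀ t ∈ Ioo (0:ℝ) 1, 0 < B t := by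
          rintro t ⟨ht0, ht1⟩
          rcases (not_and_or.mp hy) with h | h
          · have : 0 < y₁ := lt_of_le_of_ne hy₁ (Ne.symm h)
            simp only [hB, hdy]; nlinarith
          · have : 0 < y₂ := lt_of_le_of_ne hy₂ (Ne.symm h)
            simp only [hB, hdy]; nlinarith
        have hAd : ∀ t, HasDerivAt A dx t := by
          intro t
          have h0 := ((hasDerivAt_id t).mul_const dx).add_const x₁
          rw [one_mul] at h0
          exact h0
        have hBd : ∀ t, HasDerivAt B dy t := by
          intro t
          have h0 := ((hasDerivAt_id t).mul_const dy).add_const y₁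
          rw [one_mul] at h0
          exact h0
        have hrpowA : ∀ (p : ℝ) (t : ℝ), A t ≠ 0 →
            HasDerivAt (fun s => A s ^ p) (p * A t ^ (p-1) * dx) t := by
          intro p t hAt
          have h1 := (Real.hasDerivAt_rpow_const (p := p) (Or.inl hAt)).comp t (hAd t)
          exact h1
        have hrpowB : ∀ (p : ℝ) (t : ℝ), B t ≠ 0 →
            HasDerivAt (fun s => B s ^ p) (p * B t ^ (p-1) * dy) t := by
          intro p t hBt
          have h1 := (Real.hasDerivAt_rpow_const (p := p) (Or.inl hBt)).comp t (hBd t)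
          exact h1
        apply convexOn_of_hasDerivWithinAt2_nonneg (convex_Icc 0 1)
          (f' := fun t =>
            (q * A t ^ (q-1) * dx + (q-1) * (q * B t ^ (q-1) * dy))
              - ((q * dx) * B t ^ (q-1) + (q * A t) * ((q-1) * B t ^ (q-2) * dy)))
          (f'' := fun t =>
            (q * ((q-1) * A t ^ (q-2) * dx) * dx
              + (q-1) * (q * ((q-1) * B t ^ (q-2) * dy) * dy))
              - ((q * dx) * ((q-1) * B t ^ (q-2) * dy)
                + ((q * dx) * ((q-1) * B t ^ (q-2) * dy)
                  + (q * A t) * ((q-1) * ((q-2) * B t ^ (q-3) * dy) * dy))))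
        · refine ((continuous_Dq hq1).comp ?_).continuousOn
          exact ((continuous_id.mul continuous_const).add continuous_const).prodMk
            ((continuous_id.mul continuous_const).add continuous_const)
        · intro t ht
          rw [interior_Icc] at ht
          have hAt := (hApos t ht).ne'
          have hBt := (hBpos t ht).ne'
          have h1 : HasDerivAt (fun s => Dq q (A s, B s))
              ((q * A t ^ (q-1) * dx + (q-1) * (q * B t ^ (q-1) * dy))
                - ((q * dx) * B t ^ (q-1) + (q * A t) * ((q-1) * B t ^ (q-2) * dy))) t := by
            simp only [Dq]
            have e1 := hrpowA q t hAt
            have e2 := hrpowB q t hBt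
            have e3 := hrpowB (q-1) t hBt
            have comp : HasDerivAt (fun s => q * A s * B s ^ (q-1))
                ((q * dx) * B t ^ (q-1) + (q * A t) * ((q-1) * B t ^ (q-2) * dy)) t := by
              have h4 := ((hAd t).const_mul q).mul e3
              rw [show q - 1 - 1 = q - 2 by ring] at h4
              convert h4 using 1
              all_goals rfl
            exact (e1.add (e2.const_mul (q-1))).sub comp
          exact h1.hasDerivWithinAt
        · intro t ht
          rw [interior_Icc] at ht
          have hAt := (hApos t ht).ne'
          have hBt := (hBpos t ht).ne'
          have e1 : HasDerivAt (fun s => q * A s ^ (q-1) * dx)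
              (q * ((q-1) * A t ^ (q-2) * dx) * dx) t := by
            have h := ((hrpowA (q-1) t hAt).const_mul q).mul_const dx
            rw [show q - 1 - 1 = q - 2 by ring] at h
            convert h using 1
          have e2 : HasDerivAt (fun s => (q-1) * (q * B s ^ (q-1) * dy))
              ((q-1) * (q * ((q-1) * B t ^ (q-2) * dy) * dy)) t := by
            have h := (((hrpowB (q-1) t hBt).const_mul q).mul_const dy).const_mul (q-1)
            rw [show q - 1 - 1 = q - 2 by ring] at h
            convert h using 1
          have e3 : HasDerivAt (fun s => (q * dx) * B s ^ (q-1))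
              ((q * dx) * ((q-1) * B t ^ (q-2) * dy)) t := by
            have h := (hrpowB (q-1) t hBt).const_mul (q * dx)
            rw [show q - 1 - 1 = q - 2 by ring] at h
            convert h using 1
          have e4 : HasDerivAt (fun s => (q * A s) * ((q-1) * B s ^ (q-2) * dy))
              ((q * dx) * ((q-1) * B t ^ (q-2) * dy)
                + (q * A t) * ((q-1) * ((q-2) * B t ^ (q-3) * dy) * dy)) t := by
            have h := ((hAd t).const_mul q).mul
              (((hrpowB (q-2) t hBt).const_mul (q-1)).mul_const dy)
            rw [show q - 2 - 1 = q - 3 by ring] at h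
            convert h using 1
            all_goals rfl
          exact ((e1.add e2).sub (e3.add e4)).hasDerivWithinAt
        · intro t ht
          rw [interior_Icc] at ht
          have hAt := hApos t ht
          have hBt := hBpos t ht
          have hBB : B t ^ (q-3) * B t = B t ^ (q-2) := by
            nth_rewrite 2 [← Real.rpow_one (B t)]
            rw [← Real.rpow_add hBt]; ring_nf
          have hkey := key_amgm hq1 hq2 hAt hBt
          have hZ0 : 0 ≤ B t ^ (q-3) * ((q-1) * B t + (2-q) * A t) := by
            apply mul_nonneg (Real.rpow_nonneg hBt.le _)
            nlinarith
          have hquad := quad_nonneg (Real.rpow_nonneg hAt.le (q-2)) hZ0 hkey (u := dx) (v := dy)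
          have heq : (q * ((q-1) * A t ^ (q-2) * dx) * dx
              + (q-1) * (q * ((q-1) * B t ^ (q-2) * dy) * dy))
              - ((q * dx) * ((q-1) * B t ^ (q-2) * dy)
                + ((q * dx) * ((q-1) * B t ^ (q-2) * dy)
                  + (q * A t) * ((q-1) * ((q-2) * B t ^ (q-3) * dy) * dy)))
              = (q * (q-1)) *
              (A t ^ (q-2) * dx ^ 2 - 2 * B t ^ (q-2) * dx * dy
                + (B t ^ (q-3) * ((q-1) * B t + (2-q) * A t)) * dy ^ 2) := by
            rw [← hBB]; ring
          rw [heq]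
          exact mul_nonneg (by nlinarith) hquad
  have hfin := (key x₁ y₁ x₂ y₂ hx₁ hy₁ hx₂ hy₂).2
    (⟨le_refl 0, zero_le_one⟩ : (0:ℝ) ∈ Icc (0:ℝ) 1)
    (⟨zero_le_one, le_refl 1⟩ : (1:ℝ) ∈ Icc (0:ℝ) 1) ha hb hab
  have ha' : a = 1 - b := by linarith
  simp only [smul_eq_mul] at hfin
  have eA : a * 0 + b * 1 = b := by ring
  rw [eA] at hfin
  have eA1 : b * (x₂ - x₁) + x₁ = a * x₁ + b * x₂ := by subst ha'; ring
  have eB1 : b * (y₂ - y₁) + y₁ = a * y₁ + b * y₂ := by subst ha'; ring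
  rw [eA1, eB1] at hfin
  have eZ : (0:ℝ) * (x₂ - x₁) + x₁ = x₁ := by ring
  have eZ2 : (0:ℝ) * (y₂ - y₁) + y₁ = y₁ := by ring
  have eO : (1:ℝ) * (x₂ - x₁) + x₁ = x₂ := by ring
  have eO2 : (1:ℝ) * (y₂ - y₁) + y₁ = y₂ := by ring
  rw [eZ, eZ2, eO, eO2] at hfin
  simpa [Prod.smul_mk, Prod.mk_add_mk, smul_eq_mul] using hfin

section Helpers

variable {X Y : Type*} [MeasurableSpace X] [MeasurableSpace Y]
  {μx : Measure X} {μy : Measure Y}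

lemma measurePreserving_snd' [IsProbabilityMeasure μx] [SFinite μy] :
    MeasurePreserving (Prod.snd : X × Y → Y) (μx.prod μy) μy :=
  ⟨measurable_snd, by rw [Measure.map_snd_prod, measure_univ, one_smul]⟩

lemma integrable_comp_snd [IsProbabilityMeasure μx] [SFinite μy] {f : Y → ℝ}
    (hf : AEStronglyMeasurable f μy) (h : Integrable f μy) :
    Integrable (fun p : X × Y => f p.2) (μx.prod μy) :=
  (measurePreserving_snd'.integrable_comp hf).mpr h

lemma integral_comp_snd [IsProbabilityMeasure μx] [SFinite μy] {f : Y → ℝ}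
    (hf : AEStronglyMeasurable f μy) :
    ∫ p, f p.2 ∂(μx.prod μy) = ∫ y, f y ∂μy := by
  have h : Measure.map (Prod.snd : X × Y → Y) (μx.prod μy) = μy :=
    measurePreserving_snd'.map_eq
  have h2 := integral_map (μ := μx.prod μy) (φ := (Prod.snd : X × Y → Y))
    measurable_snd.aemeasurable
    (f := f) (by rwa [h])
  rw [h] at h2
  exact h2.symm

end Helpers

/-- One-dimensional Jensen: `(∫ f)^q ≤ ∫ f^q`. -/
lemma jensen_rpow {A : Type*} [MeasurableSpace A] {α : Measure A} [IsProbabilityMeasure α]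
    (hq1 : 1 < q) {f : A → ℝ} (h0 : ∀ a, 0 ≤ f a)
    (hint : Integrable f α) (hintq : Integrable (fun a => f a ^ q) α) :
    (∫ a, f a ∂α) ^ q ≤ ∫ a, f a ^ q ∂α := by
  have hc : ContinuousOn (fun x : ℝ => x ^ q) (Ici 0) :=
    (continuous_rpow_const' (by linarith)).continuousOn
  have h := (convexOn_rpow hq1.le).map_average_le hc isClosed_Ici
    (Filter.Eventually.of_forall fun a => h0 a) hint hintq
  rwa [average_eq_integral, average_eq_integral] at h

/-- The core two-space inequality. -/
lemma step2 {A B : Type*} [MeasurableSpace A] [MeasurableSpace B]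
    {α : Measure A} {ν : Measure B} [IsProbabilityMeasure α] [IsProbabilityMeasure ν]
    (hq1 : 1 < q) (hq2 : q ≤ 2)
    {K : A × B → ℝ} (hK : Measurable K) (hK0 : ∀ p, 0 ≤ K p)
    (hKi : Integrable K (α.prod ν)) (hKqi : Integrable (fun p => K p ^ q) (α.prod ν)) :
    ∫ a, (∫ b, K (a, b) ∂ν) ^ q ∂α - (∫ p, K p ∂(α.prod ν)) ^ q
      ≤ ∫ b, ((∫ a, K (a, b) ^ q ∂α) - (∫ a, K (a, b) ∂α) ^ q) ∂ν := by
  have hq0 : (0:ℝ) < q := by linarith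
  set G : A → ℝ := fun a => ∫ b, K (a, b) ∂ν with hG
  set Gb : B → ℝ := fun b => ∫ a, K (a, b) ∂α with hGb
  set m : ℝ := ∫ p, K p ∂(α.prod ν) with hm
  have hKsm : StronglyMeasurable K := hK.stronglyMeasurable
  have hGsm : StronglyMeasurable G := hKsm.integral_prod_right'
  have hGbsm : StronglyMeasurable Gb := hKsm.integral_prod_left'
  have hG0 : ∀ a, 0 ≤ G a := fun a => integral_nonneg fun b => hK0 _
  have hGb0 : ∀ b, 0 ≤ Gb b := fun b => integral_nonneg fun a => hK0 _
  have hm0 : 0 ≤ m := integral_nonneg hK0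
  have hGi : Integrable G α := hKi.integral_prod_left
  have hGbi : Integrable Gb ν := hKi.swap.integral_prod_left
  have hKq_swap : Integrable (fun p : B × A => K (p.2, p.1) ^ q) (ν.prod α) := hKqi.swap
  have hQbi : Integrable (fun b => ∫ a, K (a, b) ^ q ∂α) ν := hKq_swap.integral_prod_left
  have hQai : Integrable (fun a => ∫ b, K (a, b) ^ q ∂ν) α := hKqi.integral_prod_left
  have hslice_a : ∀ᵐ a ∂α, Integrable (fun b => K (a, b)) ν := hKi.prod_right_ae
  have hslice_aq : ∀ᵐ a ∂α, Integrable (fun b => K (a, b) ^ q) ν := hKqi.prod_right_ae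
  have hslice_b : ∀ᵐ b ∂ν, Integrable (fun a => K (a, b)) α := hKi.swap.prod_right_ae
  have hslice_bq : ∀ᵐ b ∂ν, Integrable (fun a => K (a, b) ^ q) α := hKq_swap.prod_right_ae
  have hGq_bound : ∀ᵐ a ∂α, G a ^ q ≤ ∫ b, K (a, b) ^ q ∂ν := by
    filter_upwards [hslice_a, hslice_aq] with a h1 h2
    exact jensen_rpow hq1 (fun b => hK0 _) h1 h2
  have hGbq_bound : ∀ᵐ b ∂ν, Gb b ^ q ≤ ∫ a, K (a, b) ^ q ∂α := by
    filter_upwards [hslice_b, hslice_bq] with b h1 h2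
    exact jensen_rpow hq1 (fun a => hK0 _) h1 h2
  have hGqi : Integrable (fun a => G a ^ q) α := by
    refine hQai.mono'
      ((continuous_rpow_const' hq0.le).comp_stronglyMeasurable hGsm).aestronglyMeasurable ?_
    filter_upwards [hGq_bound] with a h
    rw [Real.norm_eq_abs, abs_of_nonneg (Real.rpow_nonneg (hG0 a) q)]
    exact h
  have hGbqi : Integrable (fun b => Gb b ^ q) ν := by
    refine hQbi.mono'
      ((continuous_rpow_const' hq0.le).comp_stronglyMeasurable hGbsm).aestronglyMeasurable ?_
    filter_upwards [hGbq_bound] with b h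
    rw [Real.norm_eq_abs, abs_of_nonneg (Real.rpow_nonneg (hGb0 b) q)]
    exact h
  have hmG : m = ∫ a, G a ∂α := by rw [hm, integral_prod _ hKi]
  have hmGb : m = ∫ b, Gb b ∂ν := by
    rw [hm, integral_prod _ hKi]
    exact integral_integral_swap hKi
  -- Step A : identity
  have hmm : m ^ (q-1) * m = m ^ q := rpow_sub_one_mul_self hm0 hq1
  have stepA : ∫ a, Dq q (G a, m) ∂α = (∫ a, G a ^ q ∂α) - m ^ q := by
    have he : ∀ a, Dq q (G a, m) = G a ^ q + (q-1) * m ^ q - (q * m ^ (q-1)) * G a := by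
      intro a; simp only [Dq]; ring
    simp_rw [he]
    have i1 : Integrable (fun a => G a ^ q + (q-1) * m ^ q) α := hGqi.add (integrable_const _)
    have i2 : Integrable (fun a => (q * m ^ (q-1)) * G a) α := hGi.const_mul _
    rw [integral_sub i1 i2, integral_add hGqi (integrable_const _), integral_const,
      integral_const_mul _ _, ← hmG]
    simp only [probReal_univ, one_smul]
    linear_combination (-q) * hmm
  -- integrability of the product integrand
  have hGbq_snd : Integrable (fun p : A × B => Gb p.2 ^ q) (α.prod ν) :=
    integrable_comp_snd hGbqi.aestronglyMeasurable hGbqi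
  have hGbsnd_sm : StronglyMeasurable (fun p : A × B => Gb p.2) :=
    hGbsm.comp_measurable measurable_snd
  have hcross_sm : StronglyMeasurable (fun p : A × B => q * K p * Gb p.2 ^ (q-1)) := by
    apply ((hKsm.const_mul q).mul _)
    exact (continuous_rpow_const' (by linarith : (0:ℝ) ≤ q - 1)).comp_stronglyMeasurable hGbsnd_sm
  have hcross : Integrable (fun p : A × B => q * K p * Gb p.2 ^ (q-1)) (α.prod ν) := by
    refine ((hKqi.add hGbq_snd).const_mul q).mono' hcross_sm.aestronglyMeasurable ?_
    refine Filter.Eventually.of_forall fun p => ?_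
    rw [Real.norm_eq_abs, abs_of_nonneg
      (mul_nonneg (mul_nonneg hq0.le (hK0 p)) (Real.rpow_nonneg (hGb0 p.2) _))]
    have h1 : K p * Gb p.2 ^ (q-1) ≤ K p ^ q + Gb p.2 ^ q := xy_le hq1 (hK0 p) (hGb0 p.2)
    calc q * K p * Gb p.2 ^ (q-1) = q * (K p * Gb p.2 ^ (q-1)) := by ring
      _ ≤ q * (K p ^ q + Gb p.2 ^ q) := by nlinarith
  have hDprod : Integrable (fun p : A × B => Dq q (K p, Gb p.2)) (α.prod ν) := by
    have he : (fun p : A × B => Dq q (K p, Gb p.2))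
        = fun p => (K p ^ q + (q-1) * Gb p.2 ^ q) - q * K p * Gb p.2 ^ (q-1) := by
      funext p; simp only [Dq]
    rw [he]
    exact (hKqi.add (hGbq_snd.const_mul _)).sub hcross
  -- Step B : pointwise a.e. Jensen in ℝ²
  have stepB : ∀ᵐ a ∂α, Dq q (G a, m) ≤ ∫ b, Dq q (K (a, b), Gb b) ∂ν := by
    filter_upwards [hslice_a, hslice_aq] with a h1 h2
    have hfi : Integrable (fun b => (K (a, b), Gb b)) ν := h1.prodMk hGbi
    have hKa_sm : StronglyMeasurable (fun b => K (a, b)) :=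
      (hK.comp measurable_prodMk_left).stronglyMeasurable
    have hgi : Integrable (fun b => Dq q (K (a, b), Gb b)) ν := by
      have he : (fun b => Dq q (K (a, b), Gb b))
          = fun b => (K (a, b) ^ q + (q-1) * Gb b ^ q) - q * K (a, b) * Gb b ^ (q-1) := by
        funext b; simp only [Dq]
      rw [he]
      refine (h2.add (hGbqi.const_mul _)).sub ?_
      have hsm : StronglyMeasurable (fun b => q * K (a, b) * Gb b ^ (q-1)) :=
        (hKa_sm.const_mul q).mul
          ((continuous_rpow_const' (by linarith : (0:ℝ) ≤ q - 1)).comp_stronglyMeasurable hGbsm)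
      refine ((h2.add hGbqi).const_mul q).mono' hsm.aestronglyMeasurable ?_
      refine Filter.Eventually.of_forall fun b => ?_
      rw [Real.norm_eq_abs, abs_of_nonneg
        (mul_nonneg (mul_nonneg hq0.le (hK0 _)) (Real.rpow_nonneg (hGb0 b) _))]
      have h3 : K (a, b) * Gb b ^ (q-1) ≤ K (a, b) ^ q + Gb b ^ q :=
        xy_le hq1 (hK0 _) (hGb0 b)
      calc q * K (a, b) * Gb b ^ (q-1) = q * (K (a, b) * Gb b ^ (q-1)) := by ring
        _ ≤ q * (K (a, b) ^ q + Gb b ^ q) := by nlinarith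
    have hmem : ∀ᵐ b ∂ν, (K (a, b), Gb b) ∈ (Ici (0:ℝ) ×ˢ Ici (0:ℝ)) :=
      Filter.Eventually.of_forall fun b => ⟨hK0 _, hGb0 b⟩
    have h := (convexOn_Dq hq1 hq2).map_average_le (continuous_Dq hq1).continuousOn
      (isClosed_Ici.prod isClosed_Ici) hmem hfi hgi
    rw [average_eq_integral, average_eq_integral, integral_pair h1 hGbi, ← hmGb] at h
    exact h
  -- Step C : integrate
  have hDGm : Integrable (fun a => Dq q (G a, m)) α := by
    have he : (fun a => Dq q (G a, m))
        = fun a => (G a ^ q + (q-1) * m ^ q) - (q * m ^ (q-1)) * G a := by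
      funext a; simp only [Dq]; ring
    rw [he]
    exact (hGqi.add (integrable_const _)).sub (hGi.const_mul _)
  have stepC : ∫ a, Dq q (G a, m) ∂α ≤ ∫ a, ∫ b, Dq q (K (a, b), Gb b) ∂ν ∂α :=
    integral_mono_ae hDGm hDprod.integral_prod_left stepB
  -- Step D : swap
  have stepD : ∫ a, ∫ b, Dq q (K (a, b), Gb b) ∂ν ∂α
      = ∫ b, ∫ a, Dq q (K (a, b), Gb b) ∂α ∂ν := integral_integral_swap hDprod
  -- Step E : inner identity
  have stepE : ∫ b, ∫ a, Dq q (K (a, b), Gb b) ∂α ∂ν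
      = ∫ b, ((∫ a, K (a, b) ^ q ∂α) - Gb b ^ q) ∂ν := by
    refine integral_congr_ae ?_
    filter_upwards [hslice_b, hslice_bq] with b h1 h2
    have he : ∀ a, Dq q (K (a, b), Gb b)
        = K (a, b) ^ q + (q-1) * Gb b ^ q - (q * Gb b ^ (q-1)) * K (a, b) := by
      intro a; simp only [Dq]; ring
    simp_rw [he]
    have i1 : Integrable (fun a => K (a, b) ^ q + (q-1) * Gb b ^ q) α :=
      h2.add (integrable_const _)
    have i2 : Integrable (fun a => (q * Gb b ^ (q-1)) * K (a, b)) α := h1.const_mul _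
    rw [integral_sub i1 i2, integral_add h2 (integrable_const _), integral_const,
      integral_const_mul _ _, show (∫ a, K (a, b) ∂α) = Gb b from rfl]
    simp only [probReal_univ, one_smul]
    have h4 : Gb b ^ (q-1) * Gb b = Gb b ^ q := rpow_sub_one_mul_self (hGb0 b) hq1
    linear_combination (-q) * h4
  calc (∫ a, G a ^ q ∂α) - m ^ q = ∫ a, Dq q (G a, m) ∂α := stepA.symm
    _ ≤ ∫ a, ∫ b, Dq q (K (a, b), Gb b) ∂ν ∂α := stepC
    _ = ∫ b, ∫ a, Dq q (K (a, b), Gb b) ∂α ∂ν := stepD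
    _ = ∫ b, ((∫ a, K (a, b) ^ q ∂α) - Gb b ^ q) ∂ν := stepE

lemma step3 {C A B : Type*} [MeasurableSpace C] [MeasurableSpace A] [MeasurableSpace B]
    {γ : Measure C} {α : Measure A} {ν : Measure B}
    [IsProbabilityMeasure γ] [IsProbabilityMeasure α] [IsProbabilityMeasure ν]
    (hq1 : 1 < q) (hq2 : q ≤ 2)
    {K : C × A × B → ℝ} (hK : Measurable K) (hK0 : ∀ p, 0 ≤ K p)
    (hKi : Integrable K (γ.prod (α.prod ν)))
    (hKqi : Integrable (fun p => K p ^ q) (γ.prod (α.prod ν))) :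
    ∫ c, ((∫ a, (∫ b, K (c, a, b) ∂ν) ^ q ∂α) - (∫ a, ∫ b, K (c, a, b) ∂ν ∂α) ^ q) ∂γ
      ≤ ∫ b, ∫ c, ((∫ a, K (c, a, b) ^ q ∂α) - (∫ a, K (c, a, b) ∂α) ^ q) ∂γ ∂ν := by
  have hq0 : (0:ℝ) < q := by linarith
  -- the rearranging measurable equivalence
  set E3 : (C × (A × B)) ≃ᵐ ((C × B) × A) :=
    ((MeasurableEquiv.refl C).prodCongr (MeasurableEquiv.prodComm : A × B ≃ᵐ B × A)).trans
      (MeasurableEquiv.prodAssoc).symm with hE3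
  have hE3coe : ∀ p : C × (A × B), E3 p = ((p.1, p.2.2), p.2.1) := fun p => rfl
  have mpE3 : MeasurePreserving (⇑E3) (γ.prod (α.prod ν)) ((γ.prod ν).prod α) := by
    have m1 : MeasurePreserving (fun p : C × (A × B) => (p.1, Prod.swap p.2))
        (γ.prod (α.prod ν)) (γ.prod (ν.prod α)) :=
      (MeasurePreserving.id γ).prod Measure.measurePreserving_swap
    have m2 : MeasurePreserving (⇑(MeasurableEquiv.prodAssoc (α := C) (β := B) (γ := A)).symm)
        (γ.prod (ν.prod α)) ((γ.prod ν).prod α) :=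
      MeasurePreserving.symm _ (measurePreserving_prodAssoc γ ν α)
    exact m2.comp m1
  -- the rearranged kernel
  set K3 : (C × B) × A → ℝ := fun p => K (p.1.1, p.2, p.1.2) with hK3def
  have hK3 : Measurable K3 := hK.comp
    ((measurable_fst.comp measurable_fst).prodMk
      (measurable_snd.prodMk (measurable_snd.comp measurable_fst)))
  have hK3i : Integrable K3 ((γ.prod ν).prod α) :=
    (mpE3.integrable_comp_emb E3.measurableEmbedding).mp hKi
  have hK3qi : Integrable (fun p => K3 p ^ q) ((γ.prod ν).prod α) :=
    (mpE3.integrable_comp_emb E3.measurableEmbedding).mp hKqi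
  -- the inner entropy kernel W on C × B
  set W : C × B → ℝ := fun p =>
    (∫ a, K (p.1, a, p.2) ^ q ∂α) - (∫ a, K (p.1, a, p.2) ∂α) ^ q with hWdef
  have hWsm1 : StronglyMeasurable (fun p : C × B => ∫ a, K (p.1, a, p.2) ^ q ∂α) := by
    have : StronglyMeasurable (fun p : (C × B) × A => K3 p ^ q) :=
      ((continuous_rpow_const' hq0.le).comp_stronglyMeasurable hK3.stronglyMeasurable)
    exact this.integral_prod_right'
  have hWsm2 : StronglyMeasurable (fun p : C × B => ∫ a, K (p.1, a, p.2) ∂α) :=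
    hK3.stronglyMeasurable.integral_prod_right'
  have hWsm : StronglyMeasurable W :=
    hWsm1.sub ((continuous_rpow_const' hq0.le).comp_stronglyMeasurable hWsm2)
  -- slices of K3 over (C × B)
  have hsl : ∀ᵐ p ∂(γ.prod ν), Integrable (fun a => K (p.1, a, p.2)) α := hK3i.prod_right_ae
  have hslq : ∀ᵐ p ∂(γ.prod ν), Integrable (fun a => K (p.1, a, p.2) ^ q) α :=
    hK3qi.prod_right_ae
  -- integrability of W over γ.prod ν
  have hWq1 : Integrable (fun p : C × B => ∫ a, K (p.1, a, p.2) ^ q ∂α) (γ.prod ν) :=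
    hK3qi.integral_prod_left
  have hW2 : Integrable (fun p : C × B => (∫ a, K (p.1, a, p.2) ∂α) ^ q) (γ.prod ν) := by
    refine hWq1.mono'
      ((continuous_rpow_const' hq0.le).comp_stronglyMeasurable hWsm2).aestronglyMeasurable ?_
    filter_upwards [hsl, hslq] with p h1 h2
    rw [Real.norm_eq_abs, abs_of_nonneg (Real.rpow_nonneg (integral_nonneg fun a => hK0 _) q)]
    exact jensen_rpow hq1 (fun a => hK0 _) h1 h2
  have hW : Integrable W (γ.prod ν) := hWq1.sub hW2
  -- slices over γ
  have hsl1 : ∀ᵐ c ∂γ, Integrable (fun y : A × B => K (c, y)) (α.prod ν) := hKi.prod_right_ae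
  have hsl1q : ∀ᵐ c ∂γ, Integrable (fun y : A × B => K (c, y) ^ q) (α.prod ν) :=
    hKqi.prod_right_ae
  -- the pointwise (in c) inequality, from step2
  have hae : ∀ᵐ c ∂γ,
      (∫ a, (∫ b, K (c, a, b) ∂ν) ^ q ∂α) - (∫ a, ∫ b, K (c, a, b) ∂ν ∂α) ^ q
        ≤ ∫ b, W (c, b) ∂ν := by
    filter_upwards [hsl1, hsl1q] with c h1 h2
    have hs2 := step2 (α := α) (ν := ν) hq1 hq2
      (K := fun y : A × B => K (c, y)) (hK.comp measurable_prodMk_left)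
      (fun y => hK0 _) h1 h2
    rw [integral_prod _ h1] at hs2
    exact hs2
  -- integrability of both sides as functions of c
  have hLB : Integrable (fun c => ∫ b, W (c, b) ∂ν) γ := hW.integral_prod_left
  -- strong measurability pieces for L
  have hKm' : Measurable (fun p : (C × A) × B => K (p.1.1, p.1.2, p.2)) := hK.comp
    (((measurable_fst.comp measurable_fst).prodMk
      ((measurable_snd.comp measurable_fst).prodMk measurable_snd)))
  have hsmCA : StronglyMeasurable (fun ca : C × A => ∫ b, K (ca.1, ca.2, b) ∂ν) :=
    hKm'.stronglyMeasurable.integral_prod_right'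
  have hsmCAq : StronglyMeasurable (fun ca : C × A => (∫ b, K (ca.1, ca.2, b) ∂ν) ^ q) :=
    (continuous_rpow_const' hq0.le).comp_stronglyMeasurable hsmCA
  have hsmP1 : StronglyMeasurable (fun c => ∫ a, (∫ b, K (c, a, b) ∂ν) ^ q ∂α) :=
    hsmCAq.integral_prod_right'
  have hsmP2 : StronglyMeasurable (fun c => (∫ a, ∫ b, K (c, a, b) ∂ν ∂α) ^ q) :=
    (continuous_rpow_const' hq0.le).comp_stronglyMeasurable hsmCA.integral_prod_right'
  -- the uniform bound U
  have hU : Integrable (fun c => ∫ y : A × B, K (c, y) ^ q ∂(α.prod ν)) γ :=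
    hKqi.integral_prod_left
  have hP1bound : ∀ᵐ c ∂γ, ∫ a, (∫ b, K (c, a, b) ∂ν) ^ q ∂α
      ≤ ∫ y : A × B, K (c, y) ^ q ∂(α.prod ν) := by
    filter_upwards [hsl1, hsl1q] with c h1 h2
    have hin : ∀ᵐ a ∂α, (∫ b, K (c, a, b) ∂ν) ^ q ≤ ∫ b, K (c, a, b) ^ q ∂ν := by
      filter_upwards [h1.prod_right_ae, h2.prod_right_ae] with a g1 g2
      exact jensen_rpow hq1 (fun b => hK0 _) g1 g2
    have hZq : Integrable (fun a => (∫ b, K (c, a, b) ∂ν) ^ q) α := by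
      refine h2.integral_prod_left.mono'
        ((continuous_rpow_const' hq0.le).comp_stronglyMeasurable
          ((hK.comp measurable_prodMk_left).stronglyMeasurable.integral_prod_right')).aestronglyMeasurable ?_
      filter_upwards [hin] with a ha
      rw [Real.norm_eq_abs, abs_of_nonneg (Real.rpow_nonneg (integral_nonneg fun b => hK0 _) q)]
      exact ha.trans (le_refl _)
    calc ∫ a, (∫ b, K (c, a, b) ∂ν) ^ q ∂α ≤ ∫ a, ∫ b, K (c, a, b) ^ q ∂ν ∂α :=
          integral_mono_ae hZq h2.integral_prod_left hin
      _ = ∫ y : A × B, K (c, y) ^ q ∂(α.prod ν) := (integral_prod _ h2).symm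
  have hP1 : Integrable (fun c => ∫ a, (∫ b, K (c, a, b) ∂ν) ^ q ∂α) γ := by
    refine hU.mono' hsmP1.aestronglyMeasurable ?_
    filter_upwards [hP1bound] with c h
    rw [Real.norm_eq_abs, abs_of_nonneg
      (integral_nonneg fun a => Real.rpow_nonneg (integral_nonneg fun b => hK0 _) q)]
    exact h
  have hP2 : Integrable (fun c => (∫ a, ∫ b, K (c, a, b) ∂ν ∂α) ^ q) γ := by
    refine hU.mono' hsmP2.aestronglyMeasurable ?_
    filter_upwards [hsl1, hsl1q, hP1bound] with c h1 h2 h3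
    rw [Real.norm_eq_abs, abs_of_nonneg (Real.rpow_nonneg
      (integral_nonneg fun a => integral_nonneg fun b => hK0 _) q)]
    have hin : ∀ᵐ a ∂α, (∫ b, K (c, a, b) ∂ν) ^ q ≤ ∫ b, K (c, a, b) ^ q ∂ν := by
      filter_upwards [h1.prod_right_ae, h2.prod_right_ae] with a g1 g2
      exact jensen_rpow hq1 (fun b => hK0 _) g1 g2
    have hZq : Integrable (fun a => (∫ b, K (c, a, b) ∂ν) ^ q) α := by
      refine h2.integral_prod_left.mono'
        ((continuous_rpow_const' hq0.le).comp_stronglyMeasurable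
          ((hK.comp measurable_prodMk_left).stronglyMeasurable.integral_prod_right')).aestronglyMeasurable ?_
      filter_upwards [hin] with a ha
      rw [Real.norm_eq_abs, abs_of_nonneg (Real.rpow_nonneg (integral_nonneg fun b => hK0 _) q)]
      exact ha
    calc (∫ a, ∫ b, K (c, a, b) ∂ν ∂α) ^ q ≤ ∫ a, (∫ b, K (c, a, b) ∂ν) ^ q ∂α :=
          jensen_rpow hq1 (fun a => integral_nonneg fun b => hK0 _) h1.integral_prod_left hZq
      _ ≤ _ := h3
  have hL : Integrable
      (fun c => (∫ a, (∫ b, K (c, a, b) ∂ν) ^ q ∂α) - (∫ a, ∫ b, K (c, a, b) ∂ν ∂α) ^ q) γ :=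
    hP1.sub hP2
  calc ∫ c, ((∫ a, (∫ b, K (c, a, b) ∂ν) ^ q ∂α) - (∫ a, ∫ b, K (c, a, b) ∂ν ∂α) ^ q) ∂γ
      ≤ ∫ c, ∫ b, W (c, b) ∂ν ∂γ := integral_mono_ae hL hLB hae
    _ = ∫ b, ∫ c, W (c, b) ∂γ ∂ν := integral_integral_swap hW

/-- update commutes with insertNth at a different index. -/
lemma update_insertNth_succAbove {m : ℕ} {Ω : Fin (m + 1) → Type u} (i : Fin (m + 1))
    (k : Fin m) (b : Ω i) (r : ∀ l, Ω (i.succAbove l)) (z : Ω (i.succAbove k)) :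
    Function.update (i.insertNth b r) (i.succAbove k) z
      = i.insertNth b (Function.update r k z) := by
  ext l
  rcases eq_or_ne l i with rfl | hl
  · rw [Function.update_of_ne (Fin.succAbove_ne _ k).symm ,
      Fin.insertNth_apply_same, Fin.insertNth_apply_same]
  · obtain ⟨l', rfl⟩ := Fin.exists_succAbove_eq hl
    rcases eq_or_ne l' k with rfl | hk
    · rw [Function.update_self, Fin.insertNth_apply_succAbove, Function.update_self]
    · rw [Function.update_of_ne (fun hcon => hk (Fin.succAbove_right_injective hcon)),
        Fin.insertNth_apply_succAbove, Fin.insertNth_apply_succAbove,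
        Function.update_of_ne hk]

section PiSection
variable {m : ℕ} {Ω : Fin (m + 1) → Type u} [∀ i, MeasurableSpace (Ω i)]
  {μ : ∀ i, Measure (Ω i)} [∀ i, IsProbabilityMeasure (μ i)] {j : Fin (m + 1)}

/-- removeNth is measure preserving. -/
lemma measurePreserving_removeNth :
    MeasurePreserving (fun x : ∀ i, Ω i => j.removeNth x) (Measure.pi μ)
      (Measure.pi (fun k => μ (j.succAbove k))) :=
  measurePreserving_snd'.comp (measurePreserving_piFinSuccAbove μ j)

lemma integral_removeNth {φ : (∀ k, Ω (j.succAbove k)) → ℝ}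
    (hφ : AEStronglyMeasurable φ (Measure.pi (fun k => μ (j.succAbove k)))) :
    ∫ x, φ (j.removeNth x) ∂(Measure.pi μ)
      = ∫ c, φ c ∂(Measure.pi (fun k => μ (j.succAbove k))) := by
  have h := measurePreserving_removeNth (μ := μ) (j := j)
  have h2 := integral_map (h.measurable.aemeasurable) (f := φ) (by rwa [h.map_eq])
  rw [h.map_eq] at h2
  exact h2.symm

lemma ae_removeNth {P : (∀ k, Ω (j.succAbove k)) → Prop}
    (h : ∀ᵐ c ∂(Measure.pi (fun k => μ (j.succAbove k))), P c) :
    ∀ᵐ x ∂(Measure.pi μ), P (j.removeNth x) :=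
  ae_of_ae_map (measurePreserving_removeNth (μ := μ) (j := j)).measurable.aemeasurable
    (by rwa [(measurePreserving_removeNth (μ := μ) (j := j)).map_eq])

/-- transfer of integrability through insertNth. -/
lemma integrable_insertNth {f : (∀ i, Ω i) → ℝ} (hfi : Integrable f (Measure.pi μ)) :
    Integrable (fun p : Ω j × (∀ k, Ω (j.succAbove k)) => f (j.insertNth p.1 p.2))
      ((μ j).prod (Measure.pi (fun k => μ (j.succAbove k)))) :=
  (((measurePreserving_piFinSuccAbove μ j).symm
      (MeasurableEquiv.piFinSuccAbove Ω j)).integrable_comp_emb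
    (MeasurableEquiv.piFinSuccAbove Ω j).symm.measurableEmbedding).mpr hfi

/-- the Λ function is integrable. -/
lemma integrable_lambda {f : (∀ i, Ω i) → ℝ} (hfi : Integrable f (Measure.pi μ)) :
    Integrable (fun c => ∫ y, f (j.insertNth y c) ∂μ j)
      (Measure.pi (fun k => μ (j.succAbove k))) :=
  (integrable_insertNth hfi).swap.integral_prod_left

lemma sm_lambda {f : (∀ i, Ω i) → ℝ} (hf : Measurable f) :
    StronglyMeasurable (fun c => ∫ y, f (j.insertNth y c) ∂μ j) := by
  have h : Measurable (fun p : Ω j × (∀ k, Ω (j.succAbove k)) => f (j.insertNth p.1 p.2)) :=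
    hf.comp (MeasurableEquiv.piFinSuccAbove Ω j).symm.measurable
  exact h.stronglyMeasurable.integral_prod_left'

/-- integrability of the entropy integrand. -/
lemma entE (hq1 : 1 < q) {f : (∀ i, Ω i) → ℝ} (hf : Measurable f) (hf0 : ∀ x, 0 ≤ f x)
    (hfi : Integrable f (Measure.pi μ))
    (hfqi : Integrable (fun x => f x ^ q) (Measure.pi μ)) :
    Integrable (fun x => (∫ y, f (Function.update x j y) ^ q ∂μ j)
      - (∫ y, f (Function.update x j y) ∂μ j) ^ q) (Measure.pi μ) := by
  have hq0 : (0:ℝ) < q := by linarith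
  set ρ := Measure.pi (fun k => μ (j.succAbove k)) with hρ
  have hΛq : Integrable (fun c => ∫ y, f (j.insertNth y c) ^ q ∂μ j) ρ :=
    integrable_lambda (f := fun x => f x ^ q) hfqi
  have hΛqsm : StronglyMeasurable (fun c => ∫ y, f (j.insertNth y c) ^ q ∂μ j) :=
    sm_lambda (f := fun x => f x ^ q)
      ((continuous_rpow_const' hq0.le).measurable.comp hf)
  have hΛsm : StronglyMeasurable (fun c => ∫ y, f (j.insertNth y c) ∂μ j) := sm_lambda hf
  have hsl : ∀ᵐ c ∂ρ, Integrable (fun y => f (j.insertNth y c)) (μ j) :=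
    (integrable_insertNth hfi).swap.prod_right_ae
  have hslq : ∀ᵐ c ∂ρ, Integrable (fun y => f (j.insertNth y c) ^ q) (μ j) :=
    (integrable_insertNth hfqi).swap.prod_right_ae
  have hbound : ∀ᵐ c ∂ρ, (∫ y, f (j.insertNth y c) ∂μ j) ^ q
      ≤ ∫ y, f (j.insertNth y c) ^ q ∂μ j := by
    filter_upwards [hsl, hslq] with c h1 h2
    exact jensen_rpow hq1 (fun y => hf0 _) h1 h2
  have hΛ2 : Integrable (fun c => (∫ y, f (j.insertNth y c) ∂μ j) ^ q) ρ := by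
    refine hΛq.mono'
      ((continuous_rpow_const' hq0.le).comp_stronglyMeasurable hΛsm).aestronglyMeasurable ?_
    filter_upwards [hbound] with c h
    rw [Real.norm_eq_abs, abs_of_nonneg (Real.rpow_nonneg (integral_nonneg fun y => hf0 _) q)]
    exact h
  have hfin : Integrable (fun c => (∫ y, f (j.insertNth y c) ^ q ∂μ j)
      - (∫ y, f (j.insertNth y c) ∂μ j) ^ q) ρ := hΛq.sub hΛ2
  have htrans : Integrable (fun x => (∫ y, f (j.insertNth y (j.removeNth x)) ^ q ∂μ j)
      - (∫ y, f (j.insertNth y (j.removeNth x)) ∂μ j) ^ q) (Measure.pi μ) :=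
    ((measurePreserving_removeNth (μ := μ) (j := j)).integrable_comp
      (hΛqsm.sub ((continuous_rpow_const' hq0.le).comp_stronglyMeasurable
        hΛsm)).aestronglyMeasurable).mpr hfin
  refine htrans.congr (Filter.Eventually.of_forall fun x => ?_)
  simp only [Fin.insertNth_removeNth]

/-- Step R : single-coordinate tensorization with an auxiliary space. -/
lemma stepR (hq1 : 1 < q) (hq2 : q ≤ 2)
    {B : Type u} [MeasurableSpace B] {ν : Measure B} [IsProbabilityMeasure ν]
    {h : (∀ i, Ω i) × B → ℝ} (hh : Measurable h) (hh0 : ∀ p, 0 ≤ h p)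
    (hhi : Integrable h ((Measure.pi μ).prod ν))
    (hhqi : Integrable (fun p => h p ^ q) ((Measure.pi μ).prod ν)) :
    ∫ x, ((∫ y, (∫ b, h (Function.update x j y, b) ∂ν) ^ q ∂μ j)
        - (∫ y, ∫ b, h (Function.update x j y, b) ∂ν ∂μ j) ^ q) ∂Measure.pi μ
      ≤ ∫ b, ∫ x, ((∫ y, h (Function.update x j y, b) ^ q ∂μ j)
          - (∫ y, h (Function.update x j y, b) ∂μ j) ^ q) ∂Measure.pi μ ∂ν := by
  have hq0 : (0:ℝ) < q := by linarith
  set ρ := Measure.pi (fun k => μ (j.succAbove k)) with hρ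
  set C := ∀ k, Ω (j.succAbove k) with hC
  set e₂ := MeasurableEquiv.piFinSuccAbove Ω j with he₂
  -- the kernel
  set K : C × (Ω j) × B → ℝ := fun p => h (j.insertNth p.2.1 p.1, p.2.2) with hKdef
  have hK : Measurable K := hh.comp
    ((e₂.symm.measurable.comp ((measurable_fst.comp measurable_snd).prodMk measurable_fst)).prodMk
      (measurable_snd.comp measurable_snd))
  have hK0 : ∀ p, 0 ≤ K p := fun p => hh0 _
  -- measure preserving map ((∀ i, Ω i) × B) → (C × (Ω j × B))
  have mpE : MeasurePreserving (fun p : (∀ i, Ω i) × B => (j.removeNth p.1, (p.1 j, p.2)))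
      ((Measure.pi μ).prod ν) (ρ.prod ((μ j).prod ν)) := by
    have m1 : MeasurePreserving (Prod.map (⇑e₂) (id : B → B))
        ((Measure.pi μ).prod ν) (((μ j).prod ρ).prod ν) :=
      (measurePreserving_piFinSuccAbove μ j).prod (MeasurePreserving.id ν)
    have m2 : MeasurePreserving (Prod.map (Prod.swap : Ω j × C → C × Ω j) (id : B → B))
        (((μ j).prod ρ).prod ν) ((ρ.prod (μ j)).prod ν) :=
      Measure.measurePreserving_swap.prod (MeasurePreserving.id ν)
    have m3 := measurePreserving_prodAssoc ρ (μ j) ν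
    exact m3.comp (m2.comp m1)
  -- as a measurable equivalence (for the embedding)
  set E : ((∀ i, Ω i) × B) ≃ᵐ (C × (Ω j × B)) :=
    (e₂.prodCongr (MeasurableEquiv.refl B)).trans
      (((MeasurableEquiv.prodComm : Ω j × C ≃ᵐ C × Ω j).prodCongr (MeasurableEquiv.refl B)).trans
        MeasurableEquiv.prodAssoc) with hE
  have hEcoe : ∀ p : (∀ i, Ω i) × B, E p = (j.removeNth p.1, (p.1 j, p.2)) := fun p => rfl
  have hKE : ∀ p : (∀ i, Ω i) × B, K (E p) = h p := by
    intro p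
    show h (j.insertNth (p.1 j) (j.removeNth p.1), p.2) = h p
    rw [Fin.insertNth_self_removeNth]
  have mpE' : MeasurePreserving (⇑E) ((Measure.pi μ).prod ν) (ρ.prod ((μ j).prod ν)) := mpE
  have hKi : Integrable K (ρ.prod ((μ j).prod ν)) := by
    refine (mpE'.integrable_comp_emb E.measurableEmbedding).mp ?_
    refine hhi.congr (Filter.Eventually.of_forall fun p => ?_)
    exact (hKE p).symm
  have hKqi : Integrable (fun p => K p ^ q) (ρ.prod ((μ j).prod ν)) := by
    refine (mpE'.integrable_comp_emb E.measurableEmbedding).mp ?_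
    refine hhqi.congr (Filter.Eventually.of_forall fun p => ?_)
    show h p ^ q = K (E p) ^ q
    rw [hKE p]
  have hs3 := step3 (γ := ρ) (α := μ j) (ν := ν) hq1 hq2 hK hK0 hKi hKqi
  -- strong measurability of the two Φ̃ / Ψ̃ functions
  have hKm' : Measurable (fun p : (C × Ω j) × B => K (p.1.1, p.1.2, p.2)) := hK.comp
    (((measurable_fst.comp measurable_fst).prodMk
      ((measurable_snd.comp measurable_fst).prodMk measurable_snd)))
  have hsmCA : StronglyMeasurable (fun ca : C × Ω j => ∫ b, K (ca.1, ca.2, b) ∂ν) :=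
    hKm'.stronglyMeasurable.integral_prod_right'
  have hsmCAq : StronglyMeasurable (fun ca : C × Ω j => (∫ b, K (ca.1, ca.2, b) ∂ν) ^ q) :=
    (continuous_rpow_const' hq0.le).comp_stronglyMeasurable hsmCA
  have hsmΦ1 : StronglyMeasurable (fun c => ∫ y, (∫ b, K (c, y, b) ∂ν) ^ q ∂μ j) :=
    hsmCAq.integral_prod_right'
  have hsmΦ2 : StronglyMeasurable (fun c => (∫ y, ∫ b, K (c, y, b) ∂ν ∂μ j) ^ q) :=
    (continuous_rpow_const' hq0.le).comp_stronglyMeasurable hsmCA.integral_prod_right'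
  -- transfer LHS
  have hLHS : ∫ x, ((∫ y, (∫ b, h (Function.update x j y, b) ∂ν) ^ q ∂μ j)
      - (∫ y, ∫ b, h (Function.update x j y, b) ∂ν ∂μ j) ^ q) ∂Measure.pi μ
      = ∫ c, ((∫ y, (∫ b, K (c, y, b) ∂ν) ^ q ∂μ j)
        - (∫ y, ∫ b, K (c, y, b) ∂ν ∂μ j) ^ q) ∂ρ := by
    rw [← integral_removeNth (φ := fun c => (∫ y, (∫ b, K (c, y, b) ∂ν) ^ q ∂μ j)
      - (∫ y, ∫ b, K (c, y, b) ∂ν ∂μ j) ^ q) (hsmΦ1.sub hsmΦ2).aestronglyMeasurable]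
    refine integral_congr_ae (Filter.Eventually.of_forall fun x => ?_)
    simp only [hKdef, Fin.insertNth_removeNth]
  -- transfer RHS (pointwise in b)
  have hRHS : ∀ b : B, ∫ x, ((∫ y, h (Function.update x j y, b) ^ q ∂μ j)
      - (∫ y, h (Function.update x j y, b) ∂μ j) ^ q) ∂Measure.pi μ
      = ∫ c, ((∫ y, K (c, y, b) ^ q ∂μ j) - (∫ y, K (c, y, b) ∂μ j) ^ q) ∂ρ := by
    intro b
    have hsm1 : StronglyMeasurable (fun c => ∫ y, K (c, y, b) ^ q ∂μ j) := by
      have : Measurable (fun p : C × Ω j => K (p.1, p.2, b) ^ q) :=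
        ((continuous_rpow_const' hq0.le).measurable.comp hK).comp
          (measurable_fst.prodMk (measurable_snd.prodMk measurable_const))
      exact this.stronglyMeasurable.integral_prod_right'
    have hsm2 : StronglyMeasurable (fun c => (∫ y, K (c, y, b) ∂μ j) ^ q) := by
      have : Measurable (fun p : C × Ω j => K (p.1, p.2, b)) :=
        hK.comp (measurable_fst.prodMk (measurable_snd.prodMk measurable_const))
      exact (continuous_rpow_const' hq0.le).comp_stronglyMeasurable
        this.stronglyMeasurable.integral_prod_right'
    rw [← integral_removeNth (φ := fun c => (∫ y, K (c, y, b) ^ q ∂μ j)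
      - (∫ y, K (c, y, b) ∂μ j) ^ q) (hsm1.sub hsm2).aestronglyMeasurable]
    refine integral_congr_ae (Filter.Eventually.of_forall fun x => ?_)
    simp only [hKdef, Fin.insertNth_removeNth]
  rw [hLHS]
  refine hs3.trans (le_of_eq ?_)
  refine integral_congr_ae (Filter.Eventually.of_forall fun b => ?_)
  exact (hRHS b).symm
end PiSection

theorem main_aux (hq1 : 1 < q) (hq2 : q ≤ 2) :
    ∀ (n : ℕ) (Ω : Fin n → Type u) [∀ i, MeasurableSpace (Ω i)]
    (μ : ∀ i, Measure (Ω i)) [∀ i, IsProbabilityMeasure (μ i)]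
    (g : (∀ i, Ω i) → ℝ), Measurable g → (∀ x, 0 ≤ g x) →
    Integrable (fun x => g x ^ q) (Measure.pi μ) →
    Integrable g (Measure.pi μ) →
    ∫ x, g x ^ q ∂Measure.pi μ - (∫ x, g x ∂Measure.pi μ) ^ q
      ≤ ∫ x, (∑ i, ((∫ y, g (Function.update x i y) ^ q ∂μ i)
          - (∫ y, g (Function.update x i y) ∂μ i) ^ q)) ∂Measure.pi μ := by
  have hq0 : (0:ℝ) < q := by linarith
  intro n
  induction n with
  | zero =>
    intro Ω instM μ instP g hg hg0 hintq hint1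
    simp only [Finset.univ_eq_empty, Finset.sum_empty, integral_zero]
    have h1 : StronglyMeasurable (fun x : ∀ i, Ω i => g x ^ q) :=
      ((continuous_rpow_const' hq0.le).measurable.comp hg).stronglyMeasurable
    rw [Measure.pi_of_empty μ, integral_dirac' _ _ h1, integral_dirac' _ _ hg.stronglyMeasurable]
    simp
  | succ n IH =>
    intro Ω instM μ instP g hg hg0 hintq hint1
    set i₀ : Fin (n + 1) := 0 with hi₀
    set e := MeasurableEquiv.piFinSuccAbove Ω i₀ with he
    have mp : MeasurePreserving (⇑e) (Measure.pi μ)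
        ((μ i₀).prod (Measure.pi fun k => μ (i₀.succAbove k))) :=
      measurePreserving_piFinSuccAbove μ i₀
    have mps : MeasurePreserving (⇑e.symm)
        ((μ i₀).prod (Measure.pi fun k => μ (i₀.succAbove k))) (Measure.pi μ) := mp.symm e
    set h : (∀ k, Ω (i₀.succAbove k)) × Ω i₀ → ℝ := fun p => g (i₀.insertNth p.2 p.1) with hhdef
    have hh : Measurable h :=
      hg.comp (e.symm.measurable.comp (measurable_snd.prodMk measurable_fst))
    have hh0 : ∀ p, 0 ≤ h p := fun p => hg0 _
    have hgse : Integrable (fun p => g (e.symm p))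
        ((μ i₀).prod (Measure.pi fun k => μ (i₀.succAbove k))) :=
      (mps.integrable_comp_emb e.symm.measurableEmbedding).mpr hint1
    have hgqse : Integrable (fun p => g (e.symm p) ^ q)
        ((μ i₀).prod (Measure.pi fun k => μ (i₀.succAbove k))) :=
      (mps.integrable_comp_emb e.symm.measurableEmbedding).mpr hintq
    have hhi : Integrable h ((Measure.pi fun k => μ (i₀.succAbove k)).prod (μ i₀)) := hgse.swap
    have hhqi : Integrable (fun p => h p ^ q)
        ((Measure.pi fun k => μ (i₀.succAbove k)).prod (μ i₀)) := hgqse.swap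
    set G : (∀ k, Ω (i₀.succAbove k)) → ℝ := fun r => ∫ b, h (r, b) ∂μ i₀ with hGdef
    have hGsm : StronglyMeasurable G := hh.stronglyMeasurable.integral_prod_right'
    have hG0 : ∀ r, 0 ≤ G r := fun r => integral_nonneg fun b => hh0 _
    have hGi : Integrable G (Measure.pi fun k => μ (i₀.succAbove k)) := hhi.integral_prod_left
    have hGq_bound : ∀ᵐ r ∂(Measure.pi fun k => μ (i₀.succAbove k)),
        G r ^ q ≤ ∫ b, h (r, b) ^ q ∂μ i₀ := by
      filter_upwards [hhi.prod_right_ae, hhqi.prod_right_ae] with r h1 h2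
      exact jensen_rpow hq1 (fun b => hh0 _) h1 h2
    have hGqi : Integrable (fun r => G r ^ q) (Measure.pi fun k => μ (i₀.succAbove k)) := by
      refine hhqi.integral_prod_left.mono'
        ((continuous_rpow_const' hq0.le).comp_stronglyMeasurable hGsm).aestronglyMeasurable ?_
      filter_upwards [hGq_bound] with r hr
      rw [Real.norm_eq_abs, abs_of_nonneg (Real.rpow_nonneg (hG0 r) q)]
      exact hr
    -- Q1-Q3 : basic transfers
    have hQ1 : ∫ x, g x ^ q ∂Measure.pi μ
        = ∫ b, ∫ r, h (r, b) ^ q ∂(Measure.pi fun k => μ (i₀.succAbove k)) ∂μ i₀ := by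
      rw [← mps.integral_comp e.symm.measurableEmbedding (fun x => g x ^ q),
        integral_prod _ hgqse]
      rfl
    have hQ3 : ∫ x, g x ∂Measure.pi μ
        = ∫ r, G r ∂(Measure.pi fun k => μ (i₀.succAbove k)) := by
      rw [← mps.integral_comp e.symm.measurableEmbedding g, integral_prod _ hgse]
      exact (integral_integral_swap hhi).symm
    -- hres : coe of e.symm
    have hres : ∀ (b : Ω i₀) (r : ∀ k, Ω (i₀.succAbove k)), e.symm (b, r) = i₀.insertNth b r :=
      fun _ _ => rfl
    -- Q4 : the i₀ term
    have hsm1 : StronglyMeasurable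
        (fun r : ∀ k, Ω (i₀.succAbove k) => ∫ y, h (r, y) ^ q ∂μ i₀) :=
      ((continuous_rpow_const' hq0.le).measurable.comp hh).stronglyMeasurable.integral_prod_right'
    have hQ4 : ∫ x, ((∫ y, g (Function.update x i₀ y) ^ q ∂μ i₀)
        - (∫ y, g (Function.update x i₀ y) ∂μ i₀) ^ q) ∂Measure.pi μ
        = (∫ b, ∫ r, h (r, b) ^ q ∂(Measure.pi fun k => μ (i₀.succAbove k)) ∂μ i₀)
          - ∫ r, G r ^ q ∂(Measure.pi fun k => μ (i₀.succAbove k)) := by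
      rw [← mps.integral_comp e.symm.measurableEmbedding
        (fun x => (∫ y, g (Function.update x i₀ y) ^ q ∂μ i₀)
          - (∫ y, g (Function.update x i₀ y) ∂μ i₀) ^ q)]
      have heq : (fun p : Ω i₀ × (∀ k, Ω (i₀.succAbove k)) =>
          (∫ y, g (Function.update (e.symm p) i₀ y) ^ q ∂μ i₀)
            - (∫ y, g (Function.update (e.symm p) i₀ y) ∂μ i₀) ^ q)
          = fun p => (∫ y, h (p.2, y) ^ q ∂μ i₀) - G p.2 ^ q := by
        funext p
        obtain ⟨b, r⟩ := p
        simp only [hres, Fin.update_insertNth]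
        rfl
      rw [heq, integral_comp_snd (f := fun r => (∫ y, h (r, y) ^ q ∂μ i₀) - G r ^ q) (hsm1.sub
        ((continuous_rpow_const' hq0.le).comp_stronglyMeasurable hGsm)).aestronglyMeasurable]
      rw [integral_sub hhqi.integral_prod_left hGqi, integral_integral_swap hhqi]
    -- IH applied to G
    have hIH := IH (fun k => Ω (i₀.succAbove k)) (fun k => μ (i₀.succAbove k)) G
      hGsm.measurable hG0 hGqi hGi
    -- splitting the sum
    have hsplit : ∫ x, (∑ i, ((∫ y, g (Function.update x i y) ^ q ∂μ i)
        - (∫ y, g (Function.update x i y) ∂μ i) ^ q)) ∂Measure.pi μ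
        = ∑ i, ∫ x, ((∫ y, g (Function.update x i y) ^ q ∂μ i)
          - (∫ y, g (Function.update x i y) ∂μ i) ^ q) ∂Measure.pi μ :=
      integral_finset_sum _ (fun i _ => entE hq1 hg hg0 hint1 hintq)
    -- the Q5 transfer for i = succAbove k
    have hQ5 : ∀ k : Fin n, ∫ x, ((∫ y, g (Function.update x (i₀.succAbove k) y) ^ q
          ∂μ (i₀.succAbove k))
        - (∫ y, g (Function.update x (i₀.succAbove k) y) ∂μ (i₀.succAbove k)) ^ q) ∂Measure.pi μ
        = ∫ b, ∫ r, ((∫ y, h (Function.update r k y, b) ^ q ∂μ (i₀.succAbove k))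
          - (∫ y, h (Function.update r k y, b) ∂μ (i₀.succAbove k)) ^ q)
            ∂(Measure.pi fun k => μ (i₀.succAbove k)) ∂μ i₀ := by
      intro k
      rw [← mps.integral_comp e.symm.measurableEmbedding
        (fun x => (∫ y, g (Function.update x (i₀.succAbove k) y) ^ q ∂μ (i₀.succAbove k))
          - (∫ y, g (Function.update x (i₀.succAbove k) y) ∂μ (i₀.succAbove k)) ^ q)]
      have hEnt : Integrable (fun p => (∫ y, g (Function.update (e.symm p) (i₀.succAbove k) y) ^ q
          ∂μ (i₀.succAbove k))
          - (∫ y, g (Function.update (e.symm p) (i₀.succAbove k) y) ∂μ (i₀.succAbove k)) ^ q)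
          ((μ i₀).prod (Measure.pi fun k => μ (i₀.succAbove k))) :=
        (mps.integrable_comp_emb e.symm.measurableEmbedding).mpr
          (entE hq1 hg hg0 hint1 hintq)
      rw [integral_prod _ hEnt]
      refine integral_congr_ae (Filter.Eventually.of_forall fun b => ?_)
      refine integral_congr_ae (Filter.Eventually.of_forall fun r => ?_)
      show (∫ y, g (Function.update (e.symm (b, r)) (i₀.succAbove k) y) ^ q ∂μ (i₀.succAbove k))
          - (∫ y, g (Function.update (e.symm (b, r)) (i₀.succAbove k) y)
            ∂μ (i₀.succAbove k)) ^ q = _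
      simp only [hres, update_insertNth_succAbove]
      rfl
    -- per-k inequality
    have hperk : ∀ k : Fin n,
        ∫ r, ((∫ y, G (Function.update r k y) ^ q ∂μ (i₀.succAbove k))
          - (∫ y, G (Function.update r k y) ∂μ (i₀.succAbove k)) ^ q)
            ∂(Measure.pi fun k => μ (i₀.succAbove k))
        ≤ ∫ x, ((∫ y, g (Function.update x (i₀.succAbove k) y) ^ q ∂μ (i₀.succAbove k))
          - (∫ y, g (Function.update x (i₀.succAbove k) y) ∂μ (i₀.succAbove k)) ^ q)
            ∂Measure.pi μ := by
      intro k
      rw [hQ5 k]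
      obtain ⟨m, hm⟩ := Nat.exists_eq_succ_of_ne_zero (Nat.pos_iff_ne_zero.mp k.pos)
      subst hm
      exact stepR (j := k) hq1 hq2 hh hh0 hhi hhqi
    -- splitting the IH sum
    have hsplit2 : ∫ r, (∑ k : Fin n, ((∫ y, G (Function.update r k y) ^ q ∂μ (i₀.succAbove k))
        - (∫ y, G (Function.update r k y) ∂μ (i₀.succAbove k)) ^ q))
          ∂(Measure.pi fun k => μ (i₀.succAbove k))
        = ∑ k : Fin n, ∫ r, ((∫ y, G (Function.update r k y) ^ q ∂μ (i₀.succAbove k))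
          - (∫ y, G (Function.update r k y) ∂μ (i₀.succAbove k)) ^ q)
            ∂(Measure.pi fun k => μ (i₀.succAbove k)) := by
      refine integral_finset_sum _ (fun k _ => ?_)
      obtain ⟨m, hm⟩ := Nat.exists_eq_succ_of_ne_zero (Nat.pos_iff_ne_zero.mp k.pos)
      subst hm
      exact entE hq1 hGsm.measurable hG0 hGi hGqi
    rw [hsplit, Fin.sum_univ_succAbove _ i₀, hQ1, hQ3, hQ4]
    rw [hsplit2] at hIH
    have hsum_le : ∑ k : Fin n, ∫ r, ((∫ y, G (Function.update r k y) ^ q ∂μ (i₀.succAbove k))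
        - (∫ y, G (Function.update r k y) ∂μ (i₀.succAbove k)) ^ q)
          ∂(Measure.pi fun k => μ (i₀.succAbove k))
        ≤ ∑ k : Fin n, ∫ x, ((∫ y, g (Function.update x (i₀.succAbove k) y) ^ q
            ∂μ (i₀.succAbove k))
          - (∫ y, g (Function.update x (i₀.succAbove k) y) ∂μ (i₀.succAbove k)) ^ q)
            ∂Measure.pi μ :=
      Finset.sum_le_sum fun k _ => hperk k
    linarith [hIH, hsum_le]


theorem stmt_4 (n : ℕ) {Ω : Fin n → Type*} [∀ i, MeasurableSpace (Ω i)]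
    (μ : ∀ i, Measure (Ω i)) [∀ i, IsProbabilityMeasure (μ i)]
    (g : (∀ i, Ω i) → ℝ) (hg : Measurable g) (hg0 : ∀ x, 0 ≤ g x)
    (q : ℝ) (hq1 : 1 < q) (hq2 : q ≤ 2)
    (hintq : Integrable (fun x => g x ^ q) (Measure.pi μ))
    (hint1 : Integrable g (Measure.pi μ)) :
    ∫ x, g x ^ q ∂Measure.pi μ - (∫ x, g x ∂Measure.pi μ) ^ q
      ≤ ∫ x, (∑ i, ((∫ y, g (Function.update x i y) ^ q ∂μ i)
          - (∫ y, g (Function.update x i y) ∂μ i) ^ q)) ∂Measure.pi μ := by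
  exact main_aux hq1 hq2 n Ω μ g hg hg0 hintq hint1
end

section
/- Variational formula: for q ∈ (1,2] and nonnegative random variables g, h in L^q with E[g] = 1, one has E[g^q] - (E[g])^q ≥ q·E[g(h^{q-1} - (E h)^{q-1})] - (q-1)(E[h^q] - (E h)^q), with equality when h = g. -/
open MeasureTheory

open Set Filter Topology in
/-- Tangent-plane inequality for the Bregman divergence of `x ^ q`, `1 < q ≤ 2`.
This encodes the joint convexity of `(a, b) ↦ a^q - q a b^(q-1) + (q-1) b^q`. -/
lemma tangent_aux {q : ℝ} (hq1 : 1 < q) (hq2 : q ≤ 2) {c : ℝ} (hc : 0 < c)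
    {a b : ℝ} (ha : 0 ≤ a) (hb : 0 ≤ b) :
    1 - q * c ^ (q - 1) + (q - 1) * c ^ q + (q - q * c ^ (q - 1)) * (a - 1)
      + (q * (q - 1) * c ^ (q - 1) - q * (q - 1) * c ^ (q - 2)) * (b - c)
      ≤ a ^ q - q * (a * b ^ (q - 1)) + (q - 1) * b ^ q := by
  set α : ℝ := a - 1 with hα
  set β : ℝ := b - c with hβ
  set u : ℝ → ℝ := fun t => 1 + α * t with hu
  set v : ℝ → ℝ := fun t => c + β * t with hv
  set F : ℝ → ℝ := fun t => u t ^ q - q * (u t * v t ^ (q - 1)) + (q - 1) * v t ^ q with hF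
  set F' : ℝ → ℝ := fun t => q * α * u t ^ (q - 1) - q * α * v t ^ (q - 1)
      - q * (q - 1) * β * (u t * v t ^ (q - 2)) + q * (q - 1) * β * v t ^ (q - 1) with hF'
  set F'' : ℝ → ℝ := fun t => q * (q - 1) * α ^ 2 * u t ^ (q - 2)
      - 2 * (q * (q - 1) * α * β * v t ^ (q - 2))
      - q * (q - 1) * (q - 2) * β ^ 2 * (u t * v t ^ (q - 3))
      + q * (q - 1) ^ 2 * β ^ 2 * v t ^ (q - 2) with hF''
  have hUV : ∀ t : ℝ, 0 ≤ t → t < 1 → 0 < u t ∧ 0 < v t := by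
    intro t ht0 ht1
    constructor
    · simp only [hu]
      rw [hα]
      nlinarith [mul_nonneg ha ht0]
    · simp only [hv]
      rw [hβ]
      nlinarith [mul_nonneg hb ht0, mul_pos hc (by linarith : (0:ℝ) < 1 - t)]
  have hderiv : ∀ t : ℝ, 0 < u t → 0 < v t →
      HasDerivAt F (F' t) t ∧ HasDerivAt F' (F'' t) t := by
    intro t hU hV
    have hu' : HasDerivAt u α t := by
      simpa [hu] using ((hasDerivAt_id t).const_mul α).const_add 1
    have hv' : HasDerivAt v β t := by
      simpa [hv] using ((hasDerivAt_id t).const_mul β).const_add c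
    have huq : HasDerivAt (fun s => u s ^ q) (q * u t ^ (q - 1) * α) t :=
      (Real.hasDerivAt_rpow_const (Or.inl hU.ne')).comp t hu'
    have huq1 : HasDerivAt (fun s => u s ^ (q - 1)) ((q - 1) * u t ^ (q - 2) * α) t := by
      have h := (Real.hasDerivAt_rpow_const (p := q - 1) (Or.inl hU.ne')).comp t hu'
      rwa [show q - 1 - 1 = q - 2 by ring] at h
    have hvq : HasDerivAt (fun s => v s ^ q) (q * v t ^ (q - 1) * β) t :=
      (Real.hasDerivAt_rpow_const (Or.inl hV.ne')).comp t hv'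
    have hvq1 : HasDerivAt (fun s => v s ^ (q - 1)) ((q - 1) * v t ^ (q - 2) * β) t := by
      have h := (Real.hasDerivAt_rpow_const (p := q - 1) (Or.inl hV.ne')).comp t hv'
      rwa [show q - 1 - 1 = q - 2 by ring] at h
    have hvq2 : HasDerivAt (fun s => v s ^ (q - 2)) ((q - 2) * v t ^ (q - 3) * β) t := by
      have h := (Real.hasDerivAt_rpow_const (p := q - 2) (Or.inl hV.ne')).comp t hv'
      rwa [show q - 2 - 1 = q - 3 by ring] at h
    constructor
    · have h1 := (huq.sub ((hu'.mul hvq1).const_mul q)).add (hvq.const_mul (q - 1))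
      refine h1.congr_deriv ?_
      simp only [hF']
      ring
    · have h2 := (((huq1.const_mul (q * α)).sub (hvq1.const_mul (q * α))).sub
          ((hu'.mul hvq2).const_mul (q * (q - 1) * β))).add (hvq1.const_mul (q * (q - 1) * β))
      refine h2.congr_deriv ?_
      simp only [hF'']
      ring
  have hF''nonneg : ∀ t : ℝ, 0 < u t → 0 < v t → 0 ≤ F'' t := by
    intro t hU hV
    have hS : 0 < u t ^ (q - 2) := Real.rpow_pos_of_pos hU _
    have hW : 0 < v t ^ (q - 3) := Real.rpow_pos_of_pos hV _
    have hT : v t ^ (q - 2) = v t * v t ^ (q - 3) := by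
      rw [show q - 2 = 1 + (q - 3) by ring, Real.rpow_add hV, Real.rpow_one]
    have hQ1 : v t ^ (q - 1) = v t * v t * v t ^ (q - 3) := by
      rw [show q - 1 = 1 + (1 + (q - 3)) by ring, Real.rpow_add hV, Real.rpow_one,
        Real.rpow_add hV, Real.rpow_one]
      ring
    have hAM : v t ^ (q - 1) * u t ^ (2 - q) ≤ (q - 1) * v t + (2 - q) * u t :=
      Real.geom_mean_le_arith_mean2_weighted (by linarith) (by linarith) hV.le hU.le (by ring)
    have hUinv : u t ^ (2 - q) = (u t ^ (q - 2))⁻¹ := by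
      rw [show 2 - q = -(q - 2) by ring, Real.rpow_neg hU.le]
    have hkey : v t * v t * v t ^ (q - 3) ≤ ((q - 1) * v t + (2 - q) * u t) * u t ^ (q - 2) := by
      rw [hQ1, hUinv, ← div_eq_mul_inv] at hAM
      exact (div_le_iff₀ hS).mp hAM
    have hbr : 0 ≤ α ^ 2 * u t ^ (q - 2) - 2 * α * β * (v t * v t ^ (q - 3))
        + ((q - 1) * v t + (2 - q) * u t) * v t ^ (q - 3) * β ^ 2 := by
      nlinarith [sq_nonneg (u t ^ (q - 2) * α - v t * v t ^ (q - 3) * β),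
        mul_le_mul_of_nonneg_right hkey (mul_nonneg hW.le (sq_nonneg β)),
        hS, hW, sq_nonneg β, sq_nonneg α]
    have hexp : F'' t = q * (q - 1) * (α ^ 2 * u t ^ (q - 2) - 2 * α * β * (v t * v t ^ (q - 3))
        + ((q - 1) * v t + (2 - q) * u t) * v t ^ (q - 3) * β ^ 2) := by
      simp only [hF'']
      rw [hT]
      ring
    rw [hexp]
    exact mul_nonneg (by nlinarith) hbr
  have cu : Continuous u := by
    simp only [hu]
    exact continuous_const.add (continuous_const.mul continuous_id)
  have cv : Continuous v := by
    simp only [hv]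
    exact continuous_const.add (continuous_const.mul continuous_id)
  have hcont : Continuous F := by
    simp only [hF]
    exact ((cu.rpow_const fun t => Or.inr (by linarith)).sub
      (continuous_const.mul (cu.mul (cv.rpow_const fun t => Or.inr (by linarith))))).add
      (continuous_const.mul (cv.rpow_const fun t => Or.inr (by linarith)))
  have hconv : ConvexOn ℝ (Icc (0:ℝ) 1) F := by
    apply convexOn_of_hasDerivWithinAt2_nonneg (convex_Icc 0 1) hcont.continuousOn
      (f' := F') (f'' := F'')
    · intro t ht
      rw [interior_Icc] at ht
      exact ((hderiv t (hUV t ht.1.le ht.2).1 (hUV t ht.1.le ht.2).2).1).hasDerivWithinAt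
    · intro t ht
      rw [interior_Icc] at ht
      exact ((hderiv t (hUV t ht.1.le ht.2).1 (hUV t ht.1.le ht.2).2).2).hasDerivWithinAt
    · intro t ht
      rw [interior_Icc] at ht
      exact hF''nonneg t (hUV t ht.1.le ht.2).1 (hUV t ht.1.le ht.2).2
  have hchord : ∀ t ∈ Ioo (0:ℝ) 1, slope F 0 t ≤ F 1 - F 0 := by
    intro t ht
    have h2 := hconv.2 (by norm_num : (0:ℝ) ∈ Icc (0:ℝ) 1) (by norm_num : (1:ℝ) ∈ Icc (0:ℝ) 1)
      (by linarith [ht.2] : 0 ≤ 1 - t) ht.1.le (by ring)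
    simp only [smul_eq_mul, mul_zero, mul_one, zero_add] at h2
    rw [slope_def_field, sub_zero, div_le_iff₀ ht.1]
    linarith
  have hd0 : HasDerivAt F (F' 0) 0 :=
    (hderiv 0 (hUV 0 le_rfl one_pos).1 (hUV 0 le_rfl one_pos).2).1
  have htend : Tendsto (slope F 0) (𝓝[>] 0) (𝓝 (F' 0)) := by
    have h := (hd0.hasDerivWithinAt (s := Ioi (0:ℝ)))
    rw [hasDerivWithinAt_iff_tendsto_slope] at h
    rwa [show Ioi (0:ℝ) \ {0} = Ioi 0 from Set.diff_singleton_eq_self (by simp)] at h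
  have hltend : F' 0 ≤ F 1 - F 0 := by
    refine le_of_tendsto htend ?_
    filter_upwards [Ioo_mem_nhdsGT (by norm_num : (0:ℝ) < 1)] with t ht
    exact hchord t ht
  have e0u : u 0 = 1 := by simp [hu]
  have e0v : v 0 = c := by simp [hv]
  have e1u : u 1 = a := by simp only [hu]; rw [hα]; ring
  have e1v : v 1 = b := by simp only [hv]; rw [hβ]; ring
  have eF0 : F 0 = 1 - q * c ^ (q - 1) + (q - 1) * c ^ q := by
    simp only [hF, e0u, e0v, Real.one_rpow]
    ring
  have eF1 : F 1 = a ^ q - q * (a * b ^ (q - 1)) + (q - 1) * b ^ q := by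
    simp only [hF, e1u, e1v]
  have eF'0 : F' 0 = (q - q * c ^ (q - 1)) * α
      + (q * (q - 1) * c ^ (q - 1) - q * (q - 1) * c ^ (q - 2)) * β := by
    simp only [hF', e0u, e0v, Real.one_rpow]
    ring
  linarith [hltend, eF0.le, eF1.le]

theorem stmt_5 {Ω : Type*} [MeasurableSpace Ω] (μ : Measure Ω) [IsProbabilityMeasure μ]
    (q : ℝ) (hq1 : 1 < q) (hq2 : q ≤ 2)
    (g h : Ω → ℝ) (hg0 : ∀ x, 0 ≤ g x) (hh0 : ∀ x, 0 ≤ h x)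
    (hgq : Integrable (fun x => g x ^ q) μ) (hg1 : Integrable g μ)
    (hhq : Integrable (fun x => h x ^ q) μ) (hh1 : Integrable h μ)
    (hgh : Integrable (fun x => g x * h x ^ (q - 1)) μ)
    (hmean : ∫ x, g x ∂μ = 1) :
    (q * ∫ x, g x * (h x ^ (q - 1) - (∫ y, h y ∂μ) ^ (q - 1)) ∂μ
        - (q - 1) * (∫ x, h x ^ q ∂μ - (∫ x, h x ∂μ) ^ q)
      ≤ ∫ x, g x ^ q ∂μ - (∫ x, g x ∂μ) ^ q)
    ∧ (q * ∫ x, g x * (g x ^ (q - 1) - (∫ y, g y ∂μ) ^ (q - 1)) ∂μ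
        - (q - 1) * (∫ x, g x ^ q ∂μ - (∫ x, g x ∂μ) ^ q)
      = ∫ x, g x ^ q ∂μ - (∫ x, g x ∂μ) ^ q) := by
  have hq0 : (0:ℝ) < q := by linarith
  have hqm1 : (0:ℝ) < q - 1 := by linarith
  have hm : (0:ℝ) ≤ ∫ y, h y ∂μ := integral_nonneg hh0
  set m : ℝ := ∫ y, h y ∂μ with hmdef
  -- Jensen: ∫ g^q ≥ 1, via Bernoulli 1 + q (x - 1) ≤ x ^ q
  have i1 : Integrable (fun x => g x - 1) μ := hg1.sub (integrable_const 1)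
  have i2 : Integrable (fun x => q * (g x - 1)) μ := i1.const_mul q
  have hJ : (1:ℝ) ≤ ∫ x, g x ^ q ∂μ := by
    have hpt : ∀ x, (fun x => 1 + q * (g x - 1)) x ≤ (fun x => g x ^ q) x := by
      intro x
      have := one_add_mul_self_le_rpow_one_add
        (by linarith [hg0 x] : (-1:ℝ) ≤ g x - 1) hq1.le
      simpa using this
    have hint : Integrable (fun x => 1 + q * (g x - 1)) μ := (integrable_const 1).add i2
    have h2 := integral_mono hint hgq hpt
    rw [integral_add (integrable_const 1) i2, integral_const, integral_const_mul,
      integral_sub hg1 (integrable_const 1), integral_const, hmean] at h2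
    simpa using h2
  -- expand first integral
  have expand1 : ∫ x, g x * (h x ^ (q - 1) - m ^ (q - 1)) ∂μ
      = (∫ x, g x * h x ^ (q - 1) ∂μ) - m ^ (q - 1) := by
    have heq : (fun x => g x * (h x ^ (q - 1) - m ^ (q - 1)))
        = fun x => g x * h x ^ (q - 1) - m ^ (q - 1) * g x := by
      funext x; ring
    rw [heq, integral_sub hgh (hg1.const_mul _), integral_const_mul, hmean, mul_one]
  constructor
  · rw [hmean, Real.one_rpow, expand1]
    rcases eq_or_lt_of_le hm with hm0 | hmpos
    · -- m = 0 : h = 0 a.e.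
      have hz : h =ᵐ[μ] 0 := (integral_eq_zero_iff_of_nonneg hh0 hh1).mp hm0.symm
      have hI0 : ∫ x, g x * h x ^ (q - 1) ∂μ = 0 := by
        rw [show (0:ℝ) = ∫ _ : Ω, (0:ℝ) ∂μ by simp]
        apply integral_congr_ae
        filter_upwards [hz] with x hx
        simp [hx, Real.zero_rpow (by linarith : q - 1 ≠ 0)]
      have hH0 : ∫ x, h x ^ q ∂μ = 0 := by
        rw [show (0:ℝ) = ∫ _ : Ω, (0:ℝ) ∂μ by simp]
        apply integral_congr_ae
        filter_upwards [hz] with x hx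
        simp [hx, Real.zero_rpow (by linarith : q ≠ 0)]
      rw [hI0, hH0, ← hm0, Real.zero_rpow (by linarith : q - 1 ≠ 0),
        Real.zero_rpow (by linarith : q ≠ 0)]
      simpa using hJ
    · -- m > 0 : use the tangent-plane inequality
      set A : ℝ := q - q * m ^ (q - 1) with hA
      set B : ℝ := q * (q - 1) * m ^ (q - 1) - q * (q - 1) * m ^ (q - 2) with hB
      set K : ℝ := 1 - q * m ^ (q - 1) + (q - 1) * m ^ q with hK
      have hpt : ∀ x, (fun x => K + A * (g x - 1) + B * (h x - m)) x
          ≤ (fun x => g x ^ q - q * (g x * h x ^ (q - 1)) + (q - 1) * h x ^ q) x := by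
        intro x
        exact tangent_aux hq1 hq2 hmpos (hg0 x) (hh0 x)
      have iA : Integrable (fun x => A * (g x - 1)) μ := i1.const_mul A
      have ih1 : Integrable (fun x => h x - m) μ := hh1.sub (integrable_const m)
      have iB : Integrable (fun x => B * (h x - m)) μ := ih1.const_mul B
      have iKA : Integrable (fun x => K + A * (g x - 1)) μ := (integrable_const K).add iA
      have iR1 : Integrable (fun x => g x ^ q - q * (g x * h x ^ (q - 1))) μ :=
        hgq.sub (hgh.const_mul q)
      have iR2 : Integrable (fun x => (q - 1) * h x ^ q) μ := hhq.const_mul (q - 1)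
      have hintL : Integrable (fun x => K + A * (g x - 1) + B * (h x - m)) μ := iKA.add iB
      have hintR : Integrable
          (fun x => g x ^ q - q * (g x * h x ^ (q - 1)) + (q - 1) * h x ^ q) μ :=
        iR1.add iR2
      have hle := integral_mono hintL hintR hpt
      rw [integral_add iKA iB, integral_add (integrable_const K) iA,
        integral_const, integral_const_mul, integral_const_mul,
        integral_sub hg1 (integrable_const 1), integral_sub hh1 (integrable_const m),
        integral_const, integral_const, hmean, ← hmdef] at hle
      rw [integral_add iR1 iR2, integral_sub hgq (hgh.const_mul q),
        integral_const_mul, integral_const_mul] at hle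
      simp only [measure_univ, probReal_univ, smul_eq_mul, one_mul, sub_self,
        mul_zero, add_zero] at hle
      rw [hK] at hle
      linarith
  · -- equality case h = g
    have hpow : ∀ x, g x * g x ^ (q - 1) = g x ^ q := by
      intro x
      rcases eq_or_lt_of_le (hg0 x) with hx | hx
      · rw [← hx, zero_mul, Real.zero_rpow (ne_of_gt hq0)]
      · have hgg : g x * g x ^ (q - 1) = g x ^ (1 + (q - 1)) := by
          rw [Real.rpow_add hx, Real.rpow_one]
        rw [hgg]
        norm_num
    have expand2 : ∫ x, g x * (g x ^ (q - 1) - (∫ y, g y ∂μ) ^ (q - 1)) ∂μ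
        = (∫ x, g x ^ q ∂μ) - 1 := by
      have heq : (fun x => g x * (g x ^ (q - 1) - (∫ y, g y ∂μ) ^ (q - 1)))
          = fun x => g x ^ q - g x := by
        funext x
        rw [hmean, Real.one_rpow, mul_sub, mul_one, hpow x]
      rw [heq, integral_sub hgq hg1, hmean]
    rw [expand2, hmean, Real.one_rpow]
    ring
end

section
/- Efron–Stein inequality: if X_1,...,X_n are independent random variables and f(X) ∈ L^2, then Var(f(X)) ≤ E[ Σ_{i=1}^n Var_i f(X) ], where Var_i denotes the variance taken with respect to X_i only (conditionally on the other coordinates). -/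
open MeasureTheory

namespace ESaux
open Function

lemma mp_snd {α β : Type*} [MeasurableSpace α] [MeasurableSpace β] (μ : Measure α) (ν : Measure β)
    [IsProbabilityMeasure μ] [SFinite ν] : MeasurePreserving Prod.snd (μ.prod ν) ν :=
  ⟨measurable_snd, by simp⟩

lemma mp_integral {α β : Type*} [MeasurableSpace α] [MeasurableSpace β]
    {μ : Measure α} {ν : Measure β} {f : α → β} (h : MeasurePreserving f μ ν)
    {g : β → ℝ} (hg : AEStronglyMeasurable g ν) :
    ∫ x, g (f x) ∂μ = ∫ y, g y ∂ν := by
  rw [← h.map_eq] at hg ⊢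
  rw [integral_map h.measurable.aemeasurable hg]

lemma sq_integral_le {α : Type*} [MeasurableSpace α] {μ : Measure α} [IsProbabilityMeasure μ]
    {h : α → ℝ} (hh : MemLp h 2 μ) : (∫ x, h x ∂μ) ^ 2 ≤ ∫ x, h x ^ 2 ∂μ := by
  have h0 := ProbabilityTheory.variance_nonneg h μ
  rw [ProbabilityTheory.variance_eq_sub hh] at h0
  have h1 : (∫ x, (h ^ 2) x ∂μ) = ∫ x, h x ^ 2 ∂μ := by simp
  linarith [h0, h1]

lemma memL2_integrable_mul {α : Type*} [MeasurableSpace α] {μ : Measure α}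
    {f g : α → ℝ} (hf : MemLp f 2 μ) (hg : MemLp g 2 μ) :
    Integrable (fun x => f x * g x) μ := by
  refine Integrable.mono' ((hf.integrable_sq.add hg.integrable_sq).div_const 2)
    (hf.aestronglyMeasurable.mul hg.aestronglyMeasurable) (ae_of_all _ fun x => ?_)
  have h1 : |f x * g x| = |f x| * |g x| := abs_mul _ _
  rw [Real.norm_eq_abs, h1]
  simp only [Pi.add_apply]
  nlinarith [sq_abs (f x), sq_abs (g x), sq_nonneg (|f x| - |g x|)]

lemma contraction {α β : Type*} [MeasurableSpace α] [MeasurableSpace β]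
    {μ : Measure α} {ν : Measure β} [IsProbabilityMeasure μ] [IsProbabilityMeasure ν]
    {K : α × β → ℝ} (hKm : Measurable K) (hK2 : Integrable (fun p => K p ^ 2) (μ.prod ν)) :
    ∫ b, (∫ a, K (a, b) ∂μ) ^ 2 ∂ν ≤ ∫ p, K p ^ 2 ∂μ.prod ν := by
  have hae : ∀ᵐ b ∂ν, (∫ a, K (a, b) ∂μ) ^ 2 ≤ ∫ a, K (a, b) ^ 2 ∂μ := by
    filter_upwards [hK2.prod_left_ae] with b hb
    exact sq_integral_le ((memLp_two_iff_integrable_sq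
      (hKm.comp (measurable_id.prodMk measurable_const)).aestronglyMeasurable).2 hb)
  have hR : Integrable (fun b => ∫ a, K (a, b) ^ 2 ∂μ) ν :=
    (hK2.integral_prod_right)
  have hLm : AEStronglyMeasurable (fun b => (∫ a, K (a, b) ∂μ) ^ 2) ν :=
    ((hKm.stronglyMeasurable.integral_prod_left').measurable.pow_const 2).aestronglyMeasurable
  have hL : Integrable (fun b => (∫ a, K (a, b) ∂μ) ^ 2) ν := by
    refine Integrable.mono' hR hLm ?_
    filter_upwards [hae] with b hb
    rw [Real.norm_eq_abs, abs_of_nonneg (sq_nonneg _)]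
    exact hb
  calc ∫ b, (∫ a, K (a, b) ∂μ) ^ 2 ∂ν ≤ ∫ b, ∫ a, K (a, b) ^ 2 ∂μ ∂ν :=
        integral_mono_ae hL hR hae
    _ = ∫ p, K p ^ 2 ∂μ.prod ν := (integral_prod_symm _ hK2).symm


universe u

lemma update_insertNth_succAbove {n : ℕ} {α : Fin (n + 1) → Type u} (p : Fin (n + 1)) (j : Fin n)
    (a : α p) (b : ∀ k, α (p.succAbove k)) (y : α (p.succAbove j)) :
    update (p.insertNth a b) (p.succAbove j) y = p.insertNth a (update b j y) := by
  ext i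
  cases i using p.succAboveCases with
  | x =>
    rw [update_of_ne (Fin.succAbove_ne p j).symm]
    simp
  | p k =>
    rcases eq_or_ne k j with rfl | hk
    · simp
    · rw [update_of_ne ((Fin.succAbove_right_injective (p := p)).ne hk)]
      simp [update_of_ne hk]

noncomputable def T {n : ℕ} {Ω : Fin n → Type u} [∀ i, MeasurableSpace (Ω i)]
    (μ : ∀ i, Measure (Ω i)) (i : Fin n) (f : (∀ k, Ω k) → ℝ) : (∀ k, Ω k) → ℝ :=
  fun x => ∫ y, f (update x i y) ∂μ i

section Pi

variable {n : ℕ} {Ω : Fin n → Type u} [∀ i, MeasurableSpace (Ω i)]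
  (μ : ∀ i, Measure (Ω i)) [∀ i, IsProbabilityMeasure (μ i)]

lemma U_mp (i : Fin n) :
    MeasurePreserving (fun p : Ω i × (∀ k, Ω k) => update p.2 i p.1)
      ((μ i).prod (Measure.pi μ)) (Measure.pi μ) := by
  obtain ⟨m, rfl⟩ : ∃ m, n = m + 1 := ⟨n - 1, (Nat.succ_pred_eq_of_pos i.pos).symm⟩
  set e := MeasurableEquiv.piFinSuccAbove Ω i with he_def
  have he : MeasurePreserving e (Measure.pi μ)
      ((μ i).prod (Measure.pi fun j => μ (i.succAbove j))) :=
    measurePreserving_piFinSuccAbove μ i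
  have h1 : MeasurePreserving (Prod.map (id : Ω i → Ω i) e)
      ((μ i).prod (Measure.pi μ))
      ((μ i).prod ((μ i).prod (Measure.pi fun j => μ (i.succAbove j)))) :=
    (MeasurePreserving.id (μ i)).prod he
  have h2 : MeasurePreserving
      (Prod.map (id : Ω i → Ω i) (Prod.snd : Ω i × (∀ j, Ω (i.succAbove j)) → _))
      ((μ i).prod ((μ i).prod (Measure.pi fun j => μ (i.succAbove j))))
      ((μ i).prod (Measure.pi fun j => μ (i.succAbove j))) :=
    (MeasurePreserving.id (μ i)).prod (mp_snd _ _)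
  have h3 : MeasurePreserving e.symm
      ((μ i).prod (Measure.pi fun j => μ (i.succAbove j))) (Measure.pi μ) :=
    MeasurePreserving.symm e he
  have hcomp := h3.comp (h2.comp h1)
  have hfun : (e.symm ∘ (Prod.map (id : Ω i → Ω i) Prod.snd) ∘ Prod.map (id : Ω i → Ω i) e)
      = fun p : Ω i × (∀ k, Ω k) => update p.2 i p.1 := by
    funext p
    show e.symm (p.1, (e p.2).2) = update p.2 i p.1
    simp [he_def, MeasurableEquiv.piFinSuccAbove, Fin.insertNthEquiv, Fin.insertNth_removeNth]
  rwa [hfun] at hcomp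

variable {f : (∀ k, Ω k) → ℝ}

lemma T_meas (hf : Measurable f) (i : Fin n) : Measurable (T μ i f) := by
  have hU : Measurable fun p : Ω i × (∀ k, Ω k) => f (update p.2 i p.1) :=
    hf.comp (U_mp μ i).measurable
  exact hU.stronglyMeasurable.integral_prod_left'.measurable

lemma hU2 (hf : Measurable f) (hsq : Integrable (fun x => f x ^ 2) (Measure.pi μ)) (i : Fin n) :
    Integrable (fun p : Ω i × (∀ k, Ω k) => f (update p.2 i p.1) ^ 2)
      ((μ i).prod (Measure.pi μ)) :=
  ((U_mp μ i).integrable_comp (hf.pow_const 2).aestronglyMeasurable).2 hsq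

lemma T_int_sq_eq (hf : Measurable f) (hsq : Integrable (fun x => f x ^ 2) (Measure.pi μ))
    (i : Fin n) :
    ∫ x, ∫ y, f (update x i y) ^ 2 ∂μ i ∂Measure.pi μ = ∫ x, f x ^ 2 ∂Measure.pi μ := by
  rw [← integral_prod_symm _ (hU2 μ hf hsq i)]
  exact mp_integral (U_mp μ i) (hf.pow_const 2).aestronglyMeasurable

lemma T_sq_int (hf : Measurable f) (hsq : Integrable (fun x => f x ^ 2) (Measure.pi μ))
    (i : Fin n) :
    Integrable (fun x => ∫ y, f (update x i y) ^ 2 ∂μ i) (Measure.pi μ) :=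
  (hU2 μ hf hsq i).integral_prod_right

lemma T_jensen_ae (hf : Measurable f) (hsq : Integrable (fun x => f x ^ 2) (Measure.pi μ))
    (i : Fin n) :
    ∀ᵐ x ∂Measure.pi μ, (T μ i f x) ^ 2 ≤ ∫ y, f (update x i y) ^ 2 ∂μ i := by
  filter_upwards [(hU2 μ hf hsq i).prod_left_ae] with x hx
  exact sq_integral_le ((memLp_two_iff_integrable_sq
    ((hf.comp (measurable_update x)).aestronglyMeasurable)).2 hx)

lemma T_mem (hf : Measurable f) (hf2 : MemLp f 2 (Measure.pi μ)) (i : Fin n) :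
    MemLp (T μ i f) 2 (Measure.pi μ) := by
  refine (memLp_two_iff_integrable_sq (T_meas μ hf i).aestronglyMeasurable).2 ?_
  refine Integrable.mono' (T_sq_int μ hf hf2.integrable_sq i)
    ((T_meas μ hf i).pow_const 2).aestronglyMeasurable ?_
  filter_upwards [T_jensen_ae μ hf hf2.integrable_sq i] with x hx
  rw [Real.norm_eq_abs, abs_of_nonneg (sq_nonneg _)]
  exact hx

end Pi

section Pi2

variable {n : ℕ} {Ω : Fin n → Type u} [∀ i, MeasurableSpace (Ω i)]
  (μ : ∀ i, Measure (Ω i)) [∀ i, IsProbabilityMeasure (μ i)]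
  {f : (∀ k, Ω k) → ℝ}

lemma T_comp_U (i : Fin n) (x : ∀ k, Ω k) (y : Ω i) :
    T μ i f (update x i y) = T μ i f x := by
  unfold T
  simp [Function.update_idem]

lemma T_orth (hf : Measurable f) (hf2 : MemLp f 2 (Measure.pi μ)) (i : Fin n) :
    ∫ x, f x * T μ i f x ∂Measure.pi μ = ∫ x, (T μ i f x) ^ 2 ∂Measure.pi μ := by
  have hTm := T_meas μ hf i
  have hTmem := T_mem μ hf hf2 i
  have hfU : MemLp (fun p : Ω i × (∀ k, Ω k) => f (update p.2 i p.1)) 2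
      ((μ i).prod (Measure.pi μ)) := hf2.comp_measurePreserving (U_mp μ i)
  have hTsnd : MemLp (fun p : Ω i × (∀ k, Ω k) => T μ i f p.2) 2
      ((μ i).prod (Measure.pi μ)) := hTmem.comp_measurePreserving (mp_snd _ _)
  have hmul : Integrable (fun p : Ω i × (∀ k, Ω k) => f (update p.2 i p.1) * T μ i f p.2)
      ((μ i).prod (Measure.pi μ)) := memL2_integrable_mul hfU hTsnd
  have h1 : ∫ x, f x * T μ i f x ∂Measure.pi μ
      = ∫ p : Ω i × (∀ k, Ω k), f (update p.2 i p.1) * T μ i f (update p.2 i p.1)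
          ∂(μ i).prod (Measure.pi μ) :=
    (mp_integral (U_mp μ i) (hf.mul hTm).aestronglyMeasurable).symm
  have h2 : ∀ p : Ω i × (∀ k, Ω k),
      f (update p.2 i p.1) * T μ i f (update p.2 i p.1)
        = f (update p.2 i p.1) * T μ i f p.2 := fun p => by rw [T_comp_U]
  rw [h1]
  simp_rw [h2]
  rw [integral_prod_symm _ hmul]
  have h3 : ∀ x, ∫ y, f (update x i y) * T μ i f x ∂μ i = (T μ i f x) ^ 2 := by
    intro x
    rw [integral_mul_const]
    rw [sq]
    rfl
  simp_rw [h3]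

lemma T_diff (hf : Measurable f) (hf2 : MemLp f 2 (Measure.pi μ)) (i : Fin n) :
    ∫ x, (f x - T μ i f x) ^ 2 ∂Measure.pi μ
      = ∫ x, f x ^ 2 ∂Measure.pi μ - ∫ x, (T μ i f x) ^ 2 ∂Measure.pi μ := by
  have hTm := T_meas μ hf i
  have hTmem := T_mem μ hf hf2 i
  have hmul : Integrable (fun x => f x * T μ i f x) (Measure.pi μ) :=
    memL2_integrable_mul hf2 hTmem
  have hexp : ∀ x, (f x - T μ i f x) ^ 2
      = f x ^ 2 - 2 * (f x * T μ i f x) + (T μ i f x) ^ 2 := fun x => by ring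
  simp_rw [hexp]
  have hsub : Integrable (fun x => f x ^ 2 - 2 * (f x * T μ i f x)) (Measure.pi μ) :=
    hf2.integrable_sq.sub (hmul.const_mul 2)
  have hc2 : Integrable (fun x => 2 * (f x * T μ i f x)) (Measure.pi μ) := hmul.const_mul 2
  rw [integral_add hsub hTmem.integrable_sq,
    integral_sub hf2.integrable_sq hc2, MeasureTheory.integral_const_mul, T_orth μ hf hf2 i]
  ring

lemma V_pkg (hf : Measurable f) (hf2 : MemLp f 2 (Measure.pi μ)) (i : Fin n) :
    Integrable (fun x => ∫ y, (f (update x i y) - T μ i f x) ^ 2 ∂μ i) (Measure.pi μ)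
    ∧ ∫ x, ∫ y, (f (update x i y) - T μ i f x) ^ 2 ∂μ i ∂Measure.pi μ
        = ∫ x, (f x - T μ i f x) ^ 2 ∂Measure.pi μ := by
  set h : (∀ k, Ω k) → ℝ := fun x => f x - T μ i f x with hh_def
  have hhm : Measurable h := hf.sub (T_meas μ hf i)
  have hh2 : MemLp h 2 (Measure.pi μ) := hf2.sub (T_mem μ hf hf2 i)
  have hVeq : (fun x => ∫ y, (f (update x i y) - T μ i f x) ^ 2 ∂μ i)
      = fun x => ∫ y, h (update x i y) ^ 2 ∂μ i := by
    funext x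
    refine integral_congr_ae (ae_of_all _ fun y => ?_)
    rw [hh_def]
    simp only
    rw [T_comp_U]
  constructor
  · rw [hVeq]; exact T_sq_int μ hhm hh2.integrable_sq i
  · rw [hVeq]; exact T_int_sq_eq μ hhm hh2.integrable_sq i

end Pi2


universe v

lemma main : ∀ (N : ℕ) {Ω : Fin N → Type v} [∀ i, MeasurableSpace (Ω i)]
    (μ : ∀ i, Measure (Ω i)) [∀ i, IsProbabilityMeasure (μ i)]
    (f : (∀ k, Ω k) → ℝ) (_ : Measurable f) (_ : MemLp f 2 (Measure.pi μ)),
    ∫ x, f x ^ 2 ∂Measure.pi μ - (∫ x, f x ∂Measure.pi μ) ^ 2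
      ≤ ∑ i, ∫ x, (f x - T μ i f x) ^ 2 ∂Measure.pi μ := by
  intro N
  induction N with
  | zero =>
    intro Ω _ μ _ f hf hf2
    have hconst : ∀ x : (∀ k : Fin 0, Ω k), f x = f (fun i => i.elim0) := by
      intro x; congr 1; funext i; exact i.elim0
    simp only [Finset.univ_eq_empty, Finset.sum_empty]
    simp_rw [hconst]
    rw [integral_const, integral_const]
    simp
  | succ m IH =>
    intro Ω _ μ _ f hf hf2
    set ν : Measure (∀ j : Fin m, Ω ((0 : Fin (m+1)).succAbove j)) :=
      Measure.pi fun j => μ ((0 : Fin (m+1)).succAbove j) with hν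
    set e := MeasurableEquiv.piFinSuccAbove Ω (0 : Fin (m+1)) with he_def
    have he : MeasurePreserving e (Measure.pi μ) ((μ 0).prod ν) :=
      measurePreserving_piFinSuccAbove μ 0
    have hes : MeasurePreserving e.symm ((μ 0).prod ν) (Measure.pi μ) :=
      MeasurePreserving.symm e he
    have hesymm_apply : ∀ p : Ω 0 × (∀ j, Ω ((0 : Fin (m+1)).succAbove j)),
        e.symm p = Fin.insertNth 0 p.1 p.2 := by
      intro p; simp [he_def, MeasurableEquiv.piFinSuccAbove, Fin.insertNthEquiv]; rfl
    have he_apply_snd : ∀ x, (e x).2 = Fin.removeNth 0 x := by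
      intro x; simp [he_def, MeasurableEquiv.piFinSuccAbove, Fin.insertNthEquiv, Fin.removeNth]; rfl
    set F : Ω 0 × (∀ j, Ω ((0 : Fin (m+1)).succAbove j)) → ℝ :=
      fun p => f (Fin.insertNth 0 p.1 p.2) with hF
    have hFe : F = f ∘ e.symm := funext fun p => by rw [hF]; simp only [comp_apply,
      hesymm_apply]
    have hFm : Measurable F := by rw [hFe]; exact hf.comp e.symm.measurable
    have hF2 : MemLp F 2 ((μ 0).prod ν) := by
      rw [hFe]; exact hf2.comp_measurePreserving hes
    set g : (∀ j, Ω ((0 : Fin (m+1)).succAbove j)) → ℝ := fun b => ∫ a, F (a, b) ∂μ 0 with hg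
    have hgm : Measurable g := hFm.stronglyMeasurable.integral_prod_left'.measurable
    have hrm : MeasurePreserving (Fin.removeNth 0 : (∀ k, Ω k) → _) (Measure.pi μ) ν := by
      have h1 := (mp_snd (μ 0) ν).comp he
      have h2 : (Prod.snd ∘ e) = (Fin.removeNth 0 : (∀ k, Ω k) → _) :=
        funext fun x => he_apply_snd x
      rwa [h2] at h1
    have hT0 : T μ 0 f = fun x => g (Fin.removeNth 0 x) := by
      funext x
      show ∫ y, f (update x 0 y) ∂μ 0 = g (Fin.removeNth 0 x)
      rw [hg]; simp only
      refine integral_congr_ae (ae_of_all _ fun y => ?_)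
      show f (update x 0 y) = F (y, Fin.removeNth 0 x)
      rw [hF]; simp only
      rw [Fin.insertNth_removeNth]
    have hT0mem : MemLp (T μ 0 f) 2 (Measure.pi μ) := T_mem μ hf hf2 0
    have hgsq_int : Integrable (fun b => g b ^ 2) ν := by
      have h1 : Integrable ((fun b => g b ^ 2) ∘ Fin.removeNth 0) (Measure.pi μ) := by
        have h2 := hT0mem.integrable_sq
        rw [hT0] at h2
        exact h2
      exact (hrm.integrable_comp ((hgm.pow_const 2).aestronglyMeasurable)).1 h1
    have hgν : MemLp g 2 ν := (memLp_two_iff_integrable_sq hgm.aestronglyMeasurable).2 hgsq_int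
    have hgsq_eq : ∫ b, g b ^ 2 ∂ν = ∫ x, (T μ 0 f x) ^ 2 ∂Measure.pi μ := by
      rw [hT0]
      exact (mp_integral hrm ((hgm.pow_const 2).aestronglyMeasurable)).symm
    have hFint : Integrable F ((μ 0).prod ν) := hF2.integrable one_le_two
    have hfg : ∫ x, f x ∂Measure.pi μ = ∫ b, g b ∂ν := by
      have h1 : ∫ x, f x ∂Measure.pi μ = ∫ p, F p ∂(μ 0).prod ν := by
        rw [hFe]
        exact (mp_integral hes hf.aestronglyMeasurable).symm
      rw [h1, integral_prod_symm _ hFint]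
    have hj : ∀ j : Fin m,
        ∫ b, (g b - T (fun j' => μ ((0 : Fin (m+1)).succAbove j')) j g b) ^ 2 ∂ν
          ≤ ∫ x, (f x - T μ ((0 : Fin (m+1)).succAbove j) f x) ^ 2 ∂Measure.pi μ := by
      intro j
      set h : (∀ k, Ω k) → ℝ := fun x => f x - T μ ((0 : Fin (m+1)).succAbove j) f x with hh
      have hhm : Measurable h := hf.sub (T_meas μ hf _)
      have hh2 : MemLp h 2 (Measure.pi μ) := hf2.sub (T_mem μ hf hf2 _)
      set K : Ω 0 × (∀ j', Ω ((0 : Fin (m+1)).succAbove j')) → ℝ :=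
        fun p => h (Fin.insertNth 0 p.1 p.2) with hK
      have hKe : K = h ∘ e.symm := funext fun p => by rw [hK]; simp only [comp_apply,
        hesymm_apply]
      have hKm : Measurable K := by rw [hKe]; exact hhm.comp e.symm.measurable
      have hK2 : Integrable (fun p => K p ^ 2) ((μ 0).prod ν) := by
        have h1 := (hh2.comp_measurePreserving hes).integrable_sq
        rw [hKe]; exact h1
      have hRHS : ∫ p, K p ^ 2 ∂(μ 0).prod ν = ∫ x, h x ^ 2 ∂Measure.pi μ := by
        rw [hKe]
        exact mp_integral hes ((hhm.pow_const 2).aestronglyMeasurable)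
      have hKpt : ∀ a b, K (a, b)
          = F (a, b) - ∫ y, F (a, update b j y) ∂μ ((0 : Fin (m+1)).succAbove j) := by
        intro a b
        rw [hK, hh]; simp only
        have hTins : T μ ((0 : Fin (m+1)).succAbove j) f (Fin.insertNth 0 a b)
            = ∫ y, F (a, update b j y) ∂μ ((0 : Fin (m+1)).succAbove j) := by
          show ∫ y, f (update (Fin.insertNth 0 a b) ((0 : Fin (m+1)).succAbove j) y)
              ∂μ ((0 : Fin (m+1)).succAbove j) = _
          refine integral_congr_ae (ae_of_all _ fun y => ?_)
          show f (update (Fin.insertNth 0 a b) (Fin.succAbove 0 j) y) = F (a, update b j y)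
          rw [update_insertNth_succAbove (0 : Fin (m+1)) j a b y, hF]
        rw [hTins, hF]
      have hU' := U_mp (fun j' => μ ((0 : Fin (m+1)).succAbove j')) j
      have hM : MeasurePreserving
          (fun q : (Ω 0 × Ω ((0 : Fin (m+1)).succAbove j)) × (∀ j', Ω ((0 : Fin (m+1)).succAbove j'))
            => (q.1.1, update q.2 j q.1.2))
          (((μ 0).prod (μ ((0 : Fin (m+1)).succAbove j))).prod ν) ((μ 0).prod ν) := by
        have h1 := measurePreserving_prodAssoc (μ 0) (μ ((0 : Fin (m+1)).succAbove j)) ν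
        have h2 := (MeasurePreserving.id (μ 0)).prod hU'
        have h3 := h2.comp h1
        have h4 : ((Prod.map (id : Ω 0 → Ω 0)
            (fun p : Ω ((0 : Fin (m+1)).succAbove j) × (∀ j', Ω ((0 : Fin (m+1)).succAbove j'))
              => update p.2 j p.1)) ∘
            (MeasurableEquiv.prodAssoc :
              (Ω 0 × Ω ((0 : Fin (m+1)).succAbove j)) × (∀ j', Ω ((0 : Fin (m+1)).succAbove j'))
                ≃ᵐ Ω 0 × (Ω ((0 : Fin (m+1)).succAbove j) × (∀ j', Ω ((0 : Fin (m+1)).succAbove j')))))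
            = fun q : (Ω 0 × Ω ((0 : Fin (m+1)).succAbove j)) × (∀ j', Ω ((0 : Fin (m+1)).succAbove j'))
              => (q.1.1, update q.2 j q.1.2) := by
          funext q; rfl
        rwa [h4] at h3
      have hW : Integrable
          (fun q : (Ω 0 × Ω ((0 : Fin (m+1)).succAbove j)) × (∀ j', Ω ((0 : Fin (m+1)).succAbove j'))
            => F (q.1.1, update q.2 j q.1.2))
          (((μ 0).prod (μ ((0 : Fin (m+1)).succAbove j))).prod ν) :=
        (hM.integrable_comp hFint.aestronglyMeasurable).2 hFint
      have hclaim : ∀ᵐ b ∂ν, ∫ a, K (a, b) ∂μ 0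
          = g b - T (fun j' => μ ((0 : Fin (m+1)).succAbove j')) j g b := by
        filter_upwards [hW.prod_left_ae, hFint.prod_left_ae] with b hWb hFb
        have hsliceint : Integrable
            (fun a => ∫ y, F (a, update b j y) ∂μ ((0 : Fin (m+1)).succAbove j)) (μ 0) :=
          hWb.integral_prod_left
        have h1 : ∫ a, K (a, b) ∂μ 0
            = ∫ a, F (a, b) ∂μ 0
              - ∫ a, ∫ y, F (a, update b j y) ∂μ ((0 : Fin (m+1)).succAbove j) ∂μ 0 := by
          simp_rw [hKpt]
          exact integral_sub hFb hsliceint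
        have h2 : ∫ a, ∫ y, F (a, update b j y) ∂μ ((0 : Fin (m+1)).succAbove j) ∂μ 0
            = ∫ y, ∫ a, F (a, update b j y) ∂μ 0 ∂μ ((0 : Fin (m+1)).succAbove j) := by
          rw [integral_integral hWb, integral_prod_symm _ hWb]
        have hgb : g b = ∫ a, F (a, b) ∂μ 0 := by rw [hg]
        have hT' : T (fun j' => μ ((0 : Fin (m+1)).succAbove j')) j g b
            = ∫ y, ∫ a, F (a, update b j y) ∂μ 0 ∂μ ((0 : Fin (m+1)).succAbove j) := by
          show ∫ y, g (update b j y) ∂μ ((0 : Fin (m+1)).succAbove j) = _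
          refine integral_congr_ae (ae_of_all _ fun y => ?_)
          show g (update b j y) = ∫ a, F (a, update b j y) ∂μ 0
          rw [hg]
        rw [h1, h2, hgb, hT']
      have hcongr : ∫ b, (g b - T (fun j' => μ ((0 : Fin (m+1)).succAbove j')) j g b) ^ 2 ∂ν
          = ∫ b, (∫ a, K (a, b) ∂μ 0) ^ 2 ∂ν := by
        refine integral_congr_ae ?_
        filter_upwards [hclaim] with b hb
        rw [hb]
      calc ∫ b, (g b - T (fun j' => μ ((0 : Fin (m+1)).succAbove j')) j g b) ^ 2 ∂ν
          = ∫ b, (∫ a, K (a, b) ∂μ 0) ^ 2 ∂ν := hcongr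
        _ ≤ ∫ p, K p ^ 2 ∂(μ 0).prod ν := contraction hKm hK2
        _ = ∫ x, h x ^ 2 ∂Measure.pi μ := hRHS
        _ = ∫ x, (f x - T μ ((0 : Fin (m+1)).succAbove j) f x) ^ 2 ∂Measure.pi μ := by rw [hh]
    have hterm0 : ∫ x, (f x - T μ 0 f x) ^ 2 ∂Measure.pi μ
        = ∫ x, f x ^ 2 ∂Measure.pi μ - ∫ b, g b ^ 2 ∂ν := by
      rw [T_diff μ hf hf2 0, hgsq_eq]
    have hIH := IH (fun j => μ ((0 : Fin (m+1)).succAbove j)) g hgm hgν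
    have hsum : ∑ j : Fin m, ∫ b, (g b - T (fun j' => μ ((0 : Fin (m+1)).succAbove j')) j g b) ^ 2 ∂ν
        ≤ ∑ j : Fin m, ∫ x, (f x - T μ ((0 : Fin (m+1)).succAbove j) f x) ^ 2 ∂Measure.pi μ :=
      Finset.sum_le_sum fun j _ => hj j
    rw [Fin.sum_univ_succAbove (fun i => ∫ x, (f x - T μ i f x) ^ 2 ∂Measure.pi μ) 0]
    calc ∫ x, f x ^ 2 ∂Measure.pi μ - (∫ x, f x ∂Measure.pi μ) ^ 2
        = (∫ x, f x ^ 2 ∂Measure.pi μ - ∫ b, g b ^ 2 ∂ν)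
          + (∫ b, g b ^ 2 ∂ν - (∫ b, g b ∂ν) ^ 2) := by rw [hfg]; ring
      _ ≤ (∫ x, f x ^ 2 ∂Measure.pi μ - ∫ b, g b ^ 2 ∂ν)
          + ∑ j : Fin m, ∫ b, (g b - T (fun j' => μ ((0 : Fin (m+1)).succAbove j')) j g b) ^ 2 ∂ν :=
          add_le_add_right hIH _
      _ ≤ ∫ x, (f x - T μ 0 f x) ^ 2 ∂Measure.pi μ
          + ∑ j : Fin m, ∫ x, (f x - T μ ((0 : Fin (m+1)).succAbove j) f x) ^ 2 ∂Measure.pi μ :=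
          add_le_add (le_of_eq hterm0.symm) hsum

end ESaux


open ESaux in
theorem stmt_7 (n : ℕ) {Ω : Fin n → Type*} [∀ i, MeasurableSpace (Ω i)]
    (μ : ∀ i, Measure (Ω i)) [∀ i, IsProbabilityMeasure (μ i)]
    (f : (∀ i, Ω i) → ℝ) (hf : Measurable f) (hf2 : MemLp f 2 (Measure.pi μ)) :
    ∫ x, f x ^ 2 ∂Measure.pi μ - (∫ x, f x ∂Measure.pi μ) ^ 2
      ≤ ∫ x, ∑ i, ∫ y, (f (Function.update x i y)
          - ∫ z, f (Function.update x i z) ∂μ i) ^ 2 ∂μ i ∂Measure.pi μ := by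
  have hmain := ESaux.main n μ f hf hf2
  have hRHS : ∫ x, ∑ i, ∫ y, (f (Function.update x i y)
        - ∫ z, f (Function.update x i z) ∂μ i) ^ 2 ∂μ i ∂Measure.pi μ
      = ∑ i, ∫ x, (f x - T μ i f x) ^ 2 ∂Measure.pi μ := by
    show ∫ x, ∑ i, ∫ y, (f (Function.update x i y) - T μ i f x) ^ 2 ∂μ i ∂Measure.pi μ = _
    rw [integral_finset_sum _ (fun i _ => (V_pkg μ hf hf2 i).1)]
    exact Finset.sum_congr rfl fun i _ => (V_pkg μ hf hf2 i).2
  rw [hRHS]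
  exact hmain
end

section
/- For real p ≥ 2, the function u_p(x) = (1 - 1/p)^{p/2} + (1/(2κ_p)) x^{1-2/p} - x, with κ_p = (1/2)(1 - (1-1/p)^{p/2})^{-1}, is concave on [0,∞), satisfies u_p(0) > 0 and u_p(1) = 0; consequently any x ≥ 0 with u_p(x) ≥ 0 satisfies x ≤ 1. -/
theorem stmt_12 (p : ℝ) (hp : 2 ≤ p)
    (κ : ℝ) (hκ : κ = (1 / 2) * (1 - (1 - 1 / p) ^ (p / 2))⁻¹)
    (u : ℝ → ℝ) (hu : u = fun x => (1 - 1 / p) ^ (p / 2) + (1 / (2 * κ)) * x ^ (1 - 2 / p) - x) :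
    ConcaveOn ℝ (Set.Ici 0) u ∧ 0 < u 0 ∧ u 1 = 0 ∧ ∀ x : ℝ, 0 ≤ x → 0 ≤ u x → x ≤ 1 := by
  have hp0 : 0 < p := by linarith
  set c : ℝ := (1 - 1 / p) ^ (p / 2) with hc
  have hb0 : 0 < 1 - 1 / p := by
    have : 1 / p ≤ 1 / 2 := by
      apply div_le_div_of_nonneg_left <;> linarith
    linarith
  have hb1 : 1 - 1 / p < 1 := by
    have : 0 < 1 / p := by positivity
    linarith
  have hc0 : 0 < c := Real.rpow_pos_of_pos hb0 _
  have hc1 : c < 1 := Real.rpow_lt_one hb0.le hb1 (by linarith)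
  have hκinv : 1 / (2 * κ) = 1 - c := by
    rw [hκ]; field_simp
  have hq0 : 0 ≤ 1 - 2 / p := by
    have : 2 / p ≤ 1 := (div_le_one hp0).2 hp
    linarith
  have hq1 : 1 - 2 / p ≤ 1 := by
    have : 0 ≤ 2 / p := by positivity
    linarith
  -- concavity
  have hconc : ConcaveOn ℝ (Set.Ici 0) u := by
    rw [hu, hκinv]
    have h1 : ConcaveOn ℝ (Set.Ici 0) fun x : ℝ => c + (1 - c) * x ^ (1 - 2 / p) :=
      (((Real.concaveOn_rpow hq0 hq1).smul (by linarith : (0:ℝ) ≤ 1 - c)).add_const c).subset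
        (le_refl _) (convex_Ici 0) |>.congr (by intro x _; simp [mul_comm]; ring)
    have h2 : ConvexOn ℝ (Set.Ici 0) (fun x : ℝ => x) := convexOn_id (convex_Ici 0)
    exact h1.sub h2
  have hu1 : u 1 = 0 := by
    rw [hu]; simp [Real.one_rpow, hκinv]
  have hu0 : 0 < u 0 := by
    rw [hu, hκinv]
    rcases eq_or_lt_of_le hp with h | h
    · simp only [← h]
      norm_num
    · have : (0:ℝ) ^ (1 - 2 / p) = 0 := by
        apply Real.zero_rpow
        have : 2 / p < 1 := (div_lt_one hp0).2 h
        linarith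
      simp [this]; linarith
  refine ⟨hconc, hu0, hu1, ?_⟩
  intro x hx hux
  by_contra hx1
  push_neg at hx1
  have hxpos : 0 < x := by linarith
  -- 1 = t*0 + (1-t)*x with t = (x-1)/x
  have ht : (0:ℝ) < (x - 1) / x := div_pos (by linarith) hxpos
  have ht1 : (x - 1) / x + 1 / x = 1 := by field_simp; ring
  have h1x : 0 ≤ 1 / x := by positivity
  have key := hconc.2 (Set.mem_Ici.2 le_rfl) (Set.mem_Ici.2 hx) ht.le h1x ht1
  have hcomb : ((x - 1) / x) • (0:ℝ) + (1 / x) • x = 1 := by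
    rw [smul_eq_mul, smul_eq_mul]
    field_simp
    ring
  rw [hcomb, hu1] at key
  have : ((x - 1) / x) * u 0 ≤ 0 := by
    have h2 : 0 ≤ (1 / x) * u x := by positivity
    simp only [smul_eq_mul] at key
    nlinarith
  nlinarith [mul_pos ht hu0]
end

section
/- Lemma: for bounded f(X) with independent X_1,...,X_n, the second-order Hilbert–Schmidt norm of the first-order difference vector satisfies |𝔥(|𝔥 f|)| ≤ |𝔥^{(2)} f|_HS pointwise, where 𝔥_i f = ½||f - T_i f||_{i,∞}, 𝔥_{ij} f = ¼||f - T_i f - T_j f + T_{ij} f||_{i,j,∞} for i≠j, (𝔥^{(2)} f)_{ij} = 𝔥_{ij} f for i≠j and 0 on the diagonal, and |·|_HS is the Euclidean norm on ℝ^{n²}. -/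
open MeasureTheory Filter

/-- First-order difference operator `𝔥_i f(x) = ½ ‖f - T_i f‖_{i,∞}`, where the essential
supremum is taken over both `X_i` and its independent copy `X̄_i`. -/
noncomputable def hDiff1 (n : ℕ) {Ω : Fin n → Type*} [∀ i, MeasurableSpace (Ω i)]
    (μ : ∀ i, Measure (Ω i)) (f : (∀ i, Ω i) → ℝ) (i : Fin n) (x : ∀ i, Ω i) : ℝ :=
  (1 / 2) * essSup
    (fun q : Ω i × Ω i => |f (Function.update x i q.1) - f (Function.update x i q.2)|)
    ((μ i).prod (μ i))

/-- Euclidean norm `|𝔥 f|(x)` of the vector of first-order differences. -/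
noncomputable def hDiffNorm (n : ℕ) {Ω : Fin n → Type*} [∀ i, MeasurableSpace (Ω i)]
    (μ : ∀ i, Measure (Ω i)) (f : (∀ i, Ω i) → ℝ) (x : ∀ i, Ω i) : ℝ :=
  Real.sqrt (∑ i, hDiff1 n μ f i x ^ 2)

/-- Second-order difference operator
`𝔥_{ij} f(x) = ¼ ‖f - T_i f - T_j f + T_{ij} f‖_{i,j,∞}`. -/
noncomputable def hDiff2 (n : ℕ) {Ω : Fin n → Type*} [∀ i, MeasurableSpace (Ω i)]
    (μ : ∀ i, Measure (Ω i)) (f : (∀ i, Ω i) → ℝ) (i j : Fin n) (x : ∀ i, Ω i) : ℝ :=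
  (1 / 4) * essSup
    (fun q : (Ω i × Ω i) × (Ω j × Ω j) =>
      |f (Function.update (Function.update x i q.1.1) j q.2.1)
        - f (Function.update (Function.update x i q.1.2) j q.2.1)
        - f (Function.update (Function.update x i q.1.1) j q.2.2)
        + f (Function.update (Function.update x i q.1.2) j q.2.2)|)
    (((μ i).prod (μ i)).prod ((μ j).prod (μ j)))


section Helpers

variable {α : Type*} [MeasurableSpace α] {μ : Measure α} [IsProbabilityMeasure μ] {g : α → ℝ} {c d : ℝ}

lemma myEssSup_le (h0 : ∀ᵐ y ∂μ, 0 ≤ g y) (hc : ∀ᵐ y ∂μ, g y ≤ c) : essSup g μ ≤ c := by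
  refine limsup_le_of_le ?_ hc
  exact IsBoundedUnder.isCoboundedUnder_le ⟨0, by simpa using h0⟩

lemma myLe_essSup (hd : ∀ᵐ y ∂μ, d ≤ g y) (hc : ∀ᵐ y ∂μ, g y ≤ c) : d ≤ essSup g μ := by
  have : essSup (fun _ : α => d) μ ≤ essSup g μ := by
    refine limsup_le_limsup hd ?_ ⟨c, by simpa using hc⟩
    exact ⟨d, by simp⟩
  simpa [essSup_const' d] using this

lemma myAe_le_essSup (hc : ∀ᵐ y ∂μ, g y ≤ c) : ∀ᵐ y ∂μ, g y ≤ essSup g μ :=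
  ae_le_essSup ⟨c, by simpa using hc⟩

end Helpers

lemma sqrt_rev_triangle {n : ℕ} (a b : Fin n → ℝ) :
    |Real.sqrt (∑ i, a i ^ 2) - Real.sqrt (∑ i, b i ^ 2)|
      ≤ Real.sqrt (∑ i, (a i - b i) ^ 2) := by
  let v : EuclideanSpace ℝ (Fin n) := WithLp.toLp 2 a
  let w : EuclideanSpace ℝ (Fin n) := WithLp.toLp 2 b
  have hv : ‖v‖ = Real.sqrt (∑ i, a i ^ 2) := by
    simp [EuclideanSpace.norm_eq, Real.norm_eq_abs, sq_abs, v, w]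
  have hw : ‖w‖ = Real.sqrt (∑ i, b i ^ 2) := by
    simp [EuclideanSpace.norm_eq, Real.norm_eq_abs, sq_abs, v, w]
  have hvw : ‖v - w‖ = Real.sqrt (∑ i, (a i - b i) ^ 2) := by
    simp [EuclideanSpace.norm_eq, Real.norm_eq_abs, sq_abs, v, w]
  calc |Real.sqrt (∑ i, a i ^ 2) - Real.sqrt (∑ i, b i ^ 2)| = |‖v‖ - ‖w‖| := by rw [hv, hw]
    _ ≤ ‖v - w‖ := abs_norm_sub_norm_le v w
    _ = _ := hvw

section Main

variable {n : ℕ} {Ω : Fin n → Type*} [∀ i, MeasurableSpace (Ω i)]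
  {μ : ∀ i, Measure (Ω i)} [∀ i, IsProbabilityMeasure (μ i)]
  {f : (∀ i, Ω i) → ℝ} {C : ℝ}

lemma abs4 (A B : ℝ) (hA : |A| ≤ C) (hB : |B| ≤ C) : |A - B| ≤ 2 * C := by
  have := abs_sub_le A 0 B
  simp only [sub_zero, zero_sub, abs_neg] at this
  linarith

lemma hd1_nonneg (hb : ∀ x, |f x| ≤ C) (i : Fin n) (x : ∀ k, Ω k) : 0 ≤ hDiff1 n μ f i x := by
  have h := myLe_essSup (μ := (μ i).prod (μ i))
    (g := fun q : Ω i × Ω i => |f (Function.update x i q.1) - f (Function.update x i q.2)|)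
    (d := 0) (c := 2 * C) (ae_of_all _ fun q => abs_nonneg _)
    (ae_of_all _ fun q => abs4 _ _ (hb _) (hb _))
  unfold hDiff1; linarith

lemma hd1_le (hb : ∀ x, |f x| ≤ C) (i : Fin n) (x : ∀ k, Ω k) : hDiff1 n μ f i x ≤ C := by
  have h := myEssSup_le (μ := (μ i).prod (μ i))
    (g := fun q : Ω i × Ω i => |f (Function.update x i q.1) - f (Function.update x i q.2)|)
    (c := 2 * C) (ae_of_all _ fun q => abs_nonneg _)
    (ae_of_all _ fun q => abs4 _ _ (hb _) (hb _))
  unfold hDiff1; linarith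

lemma hd2_nonneg (hb : ∀ x, |f x| ≤ C) (i j : Fin n) (x : ∀ k, Ω k) :
    0 ≤ hDiff2 n μ f i j x := by
  have h := myLe_essSup (μ := (((μ i).prod (μ i)).prod ((μ j).prod (μ j))))
    (g := fun q : (Ω i × Ω i) × (Ω j × Ω j) =>
      |f (Function.update (Function.update x i q.1.1) j q.2.1)
        - f (Function.update (Function.update x i q.1.2) j q.2.1)
        - f (Function.update (Function.update x i q.1.1) j q.2.2)
        + f (Function.update (Function.update x i q.1.2) j q.2.2)|)
    (d := 0) (c := 4 * C) (ae_of_all _ fun q => abs_nonneg _)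
    (ae_of_all _ fun q => by
      have h1 := hb (Function.update (Function.update x i q.1.1) j q.2.1)
      have h2 := hb (Function.update (Function.update x i q.1.2) j q.2.1)
      have h3 := hb (Function.update (Function.update x i q.1.1) j q.2.2)
      have h4 := hb (Function.update (Function.update x i q.1.2) j q.2.2)
      rw [abs_le] at *
      constructor <;> [skip; skip] <;> obtain ⟨_,_⟩ := h1 <;> obtain ⟨_,_⟩ := h2 <;>
        obtain ⟨_,_⟩ := h3 <;> obtain ⟨_,_⟩ := h4 <;> linarith)
  unfold hDiff2; linarith

/-- `hDiff1` at index `i` does not depend on the `i`-th coordinate. -/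
lemma hd1_update (i : Fin n) (a : Ω i) (x : ∀ k, Ω k) :
    hDiff1 n μ f i (Function.update x i a) = hDiff1 n μ f i x := by
  unfold hDiff1
  simp [Function.update_idem]

/-- Key a.e. bound: first-order differences of `hDiff1` are controlled by `hDiff2`. -/
lemma key_ae (hb : ∀ x, |f x| ≤ C) (i j : Fin n) (x : ∀ k, Ω k) :
    ∀ᵐ q : Ω i × Ω i ∂((μ i).prod (μ i)),
      |hDiff1 n μ f j (Function.update x i q.1) - hDiff1 n μ f j (Function.update x i q.2)|
        ≤ 2 * hDiff2 n μ f i j x := by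
  set ν := ((μ i).prod (μ i)).prod ((μ j).prod (μ j)) with hν
  set D : (Ω i × Ω i) × (Ω j × Ω j) → ℝ := fun q =>
    |f (Function.update (Function.update x i q.1.1) j q.2.1)
      - f (Function.update (Function.update x i q.1.2) j q.2.1)
      - f (Function.update (Function.update x i q.1.1) j q.2.2)
      + f (Function.update (Function.update x i q.1.2) j q.2.2)| with hD
  have hDbd : ∀ q, D q ≤ 4 * C := by
    intro q
    have h1 := hb (Function.update (Function.update x i q.1.1) j q.2.1)
    have h2 := hb (Function.update (Function.update x i q.1.2) j q.2.1)
    have h3 := hb (Function.update (Function.update x i q.1.1) j q.2.2)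
    have h4 := hb (Function.update (Function.update x i q.1.2) j q.2.2)
    simp only [hD]
    rw [abs_le] at h1 h2 h3 h4 ⊢
    constructor <;> obtain ⟨_,_⟩ := h1 <;> obtain ⟨_,_⟩ := h2 <;>
      obtain ⟨_,_⟩ := h3 <;> obtain ⟨_,_⟩ := h4 <;> linarith
  have hMdef : essSup D ν = 4 * hDiff2 n μ f i j x := by
    unfold hDiff2; ring
  have hM : ∀ᵐ q ∂ν, D q ≤ 4 * hDiff2 n μ f i j x := by
    rw [← hMdef]
    exact myAe_le_essSup (ae_of_all _ hDbd)
  have hfub := Measure.ae_ae_of_ae_prod hM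
  filter_upwards [hfub] with a ha
  set M := 4 * hDiff2 n μ f i j x with hMeq
  set g₁ : Ω j × Ω j → ℝ := fun p =>
    |f (Function.update (Function.update x i a.1) j p.1)
      - f (Function.update (Function.update x i a.1) j p.2)| with hg₁
  set g₂ : Ω j × Ω j → ℝ := fun p =>
    |f (Function.update (Function.update x i a.2) j p.1)
      - f (Function.update (Function.update x i a.2) j p.2)| with hg₂
  have hgd : ∀ p, |g₁ p - g₂ p| ≤ D (a, p) := by
    intro p
    have h1 : |(f (Function.update (Function.update x i a.1) j p.1)
        - f (Function.update (Function.update x i a.1) j p.2))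
        - (f (Function.update (Function.update x i a.2) j p.1)
        - f (Function.update (Function.update x i a.2) j p.2))| = D (a, p) := by
      simp only [hD]
      congr 1
      ring
    calc |g₁ p - g₂ p| ≤ _ := abs_abs_sub_abs_le_abs_sub _ _
      _ = D (a, p) := h1
  have hg₂bd : ∀ p, g₂ p ≤ 2 * C := fun p => abs4 _ _ (hb _) (hb _)
  have hg₁bd : ∀ p, g₁ p ≤ 2 * C := fun p => abs4 _ _ (hb _) (hb _)
  have key1 : essSup g₁ ((μ j).prod (μ j)) ≤ essSup g₂ ((μ j).prod (μ j)) + M := by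
    refine myEssSup_le (ae_of_all _ fun p => abs_nonneg _) ?_
    filter_upwards [ha, myAe_le_essSup (ae_of_all _ hg₂bd)] with p hp hp2
    have := hgd p
    rw [abs_le] at this
    linarith
  have key2 : essSup g₂ ((μ j).prod (μ j)) ≤ essSup g₁ ((μ j).prod (μ j)) + M := by
    refine myEssSup_le (ae_of_all _ fun p => abs_nonneg _) ?_
    filter_upwards [ha, myAe_le_essSup (ae_of_all _ hg₁bd)] with p hp hp2
    have := hgd p
    rw [abs_le] at this
    linarith
  have e1 : hDiff1 n μ f j (Function.update x i a.1)
      = (1 / 2) * essSup g₁ ((μ j).prod (μ j)) := rfl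
  have e2 : hDiff1 n μ f j (Function.update x i a.2)
      = (1 / 2) * essSup g₂ ((μ j).prod (μ j)) := rfl
  rw [e1, e2, abs_le]
  constructor <;> [skip; skip] <;> simp only [hMeq] at key1 key2 <;> linarith

end Main

theorem stmt_15 (n : ℕ) {Ω : Fin n → Type*} [∀ i, MeasurableSpace (Ω i)]
    (μ : ∀ i, Measure (Ω i)) [∀ i, IsProbabilityMeasure (μ i)]
    (f : (∀ i, Ω i) → ℝ) (hf : Measurable f) (C : ℝ) (hb : ∀ x, |f x| ≤ C)
    (x : ∀ i, Ω i) :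
    Real.sqrt (∑ i, hDiff1 n μ (hDiffNorm n μ f) i x ^ 2)
      ≤ Real.sqrt (∑ i, ∑ j, if i = j then 0 else hDiff2 n μ f i j x ^ 2) := by
  have hC0 : 0 ≤ C := (abs_nonneg _).trans (hb x)
  set N := hDiffNorm n μ f with hN
  have hNb : ∀ y, |N y| ≤ Real.sqrt (n * C ^ 2) := by
    intro y
    rw [hN, hDiffNorm, abs_of_nonneg (Real.sqrt_nonneg _)]
    apply Real.sqrt_le_sqrt
    calc ∑ i, hDiff1 n μ f i y ^ 2 ≤ ∑ _i : Fin n, C ^ 2 :=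
          Finset.sum_le_sum fun i _ =>
            pow_le_pow_left₀ (hd1_nonneg hb i y) (hd1_le hb i y) 2
      _ = n * C ^ 2 := by simp [Finset.sum_const, mul_comm]
  have keyI : ∀ i, hDiff1 n μ N i x
      ≤ Real.sqrt (∑ j, if i = j then 0 else hDiff2 n μ f i j x ^ 2) := by
    intro i
    set K := Real.sqrt (∑ j, if i = j then 0 else hDiff2 n μ f i j x ^ 2) with hK
    have h : essSup (fun q : Ω i × Ω i =>
        |N (Function.update x i q.1) - N (Function.update x i q.2)|)
        ((μ i).prod (μ i)) ≤ 2 * K := by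
      refine myEssSup_le (ae_of_all _ fun q => abs_nonneg _) ?_
      have hall : ∀ᵐ q : Ω i × Ω i ∂((μ i).prod (μ i)), ∀ j,
          |hDiff1 n μ f j (Function.update x i q.1)
            - hDiff1 n μ f j (Function.update x i q.2)|
          ≤ (if i = j then 0 else 2 * hDiff2 n μ f i j x) := by
        rw [ae_all_iff]
        intro j
        by_cases hij : i = j
        · subst hij
          refine ae_of_all _ fun q => by simp [hd1_update]
        · simpa [hij] using key_ae hb i j x
      filter_upwards [hall] with q hq
      have h1 : |N (Function.update x i q.1) - N (Function.update x i q.2)|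
          ≤ Real.sqrt (∑ j, (hDiff1 n μ f j (Function.update x i q.1)
              - hDiff1 n μ f j (Function.update x i q.2)) ^ 2) := by
        have := sqrt_rev_triangle (fun j => hDiff1 n μ f j (Function.update x i q.1))
          (fun j => hDiff1 n μ f j (Function.update x i q.2))
        simpa [hN, hDiffNorm] using this
      have h2 : Real.sqrt (∑ j, (hDiff1 n μ f j (Function.update x i q.1)
              - hDiff1 n μ f j (Function.update x i q.2)) ^ 2)
          ≤ Real.sqrt (∑ j, (if i = j then 0 else 2 * hDiff2 n μ f i j x) ^ 2) := by
        apply Real.sqrt_le_sqrt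
        refine Finset.sum_le_sum fun j _ => ?_
        have hqj := hq j
        calc (hDiff1 n μ f j (Function.update x i q.1)
              - hDiff1 n μ f j (Function.update x i q.2)) ^ 2
            = |hDiff1 n μ f j (Function.update x i q.1)
              - hDiff1 n μ f j (Function.update x i q.2)| ^ 2 := (sq_abs _).symm
          _ ≤ _ := pow_le_pow_left₀ (abs_nonneg _) hqj 2
      have h3 : Real.sqrt (∑ j, (if i = j then 0 else 2 * hDiff2 n μ f i j x) ^ 2)
          = 2 * K := by
        have hs : ∑ j, (if i = j then 0 else 2 * hDiff2 n μ f i j x) ^ 2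
            = 4 * ∑ j, (if i = j then 0 else hDiff2 n μ f i j x ^ 2) := by
          rw [Finset.mul_sum]
          refine Finset.sum_congr rfl fun j _ => ?_
          split <;> ring
        rw [hs, show (4 : ℝ) = 2 ^ 2 by norm_num, Real.sqrt_mul (by positivity), hK,
          Real.sqrt_sq (by norm_num)]
      calc |N (Function.update x i q.1) - N (Function.update x i q.2)|
          ≤ _ := h1
        _ ≤ _ := h2
        _ = 2 * K := h3
    have e : hDiff1 n μ N i x = (1 / 2) * essSup (fun q : Ω i × Ω i =>
        |N (Function.update x i q.1) - N (Function.update x i q.2)|)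
        ((μ i).prod (μ i)) := rfl
    rw [e]; linarith
  apply Real.sqrt_le_sqrt
  refine Finset.sum_le_sum fun i _ => ?_
  have h0 : 0 ≤ hDiff1 n μ N i x := hd1_nonneg hNb i x
  have hsum0 : 0 ≤ ∑ j, if i = j then 0 else hDiff2 n μ f i j x ^ 2 :=
    Finset.sum_nonneg fun j _ => by split; exacts [le_refl _, sq_nonneg _]
  calc hDiff1 n μ N i x ^ 2
      ≤ Real.sqrt (∑ j, if i = j then 0 else hDiff2 n μ f i j x ^ 2) ^ 2 :=
        pow_le_pow_left₀ h0 (keyI i) 2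
    _ = _ := Real.sq_sqrt hsum0
end
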